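/- arXiv:2502.06290 — 4 statements merged into one kernel-verified Lean document; each statement's English description precedes it below -/
import Mathlib

section
/- Let n ≥ 2 and let f ∈ ℂ[x₀,…,xₙ] be homogeneous of degree d such that the hypersurface V = V(f) ⊆ ℙⁿ has only isolated singularities (the set of points of ℙⁿ at which all partial derivatives ∂₀f,…,∂ₙf vanish is finite). Suppose p = (1:0:⋯:0) is a singular point of V, i.e. (∂ᵢf)(1,0,…,0) = 0 for all i = 0,…,n. Set g(y₁,…,yₙ) = f(1,y₁,…,yₙ) and gⱼ = ∂g/∂yⱼ. Then the following are equivalent: (i) g belongs to the ideal generated by g₁,…,gₙ in the localization of ℂ[y₁,…,yₙ] at the maximal ideal (y₁,…,yₙ) (equivalently, there exists u ∈ ℂ[y₁,…,yₙ] with u(0) ≠ 0 and u·g ∈ (g₁,…,gₙ)); (ii) there exist a tuple (A₀,…,Aₙ) ∈ R^{n+1} with A₀∂₀f + ⋯ + Aₙ∂ₙf = 0 and an index k ∈ {0,…,n} with Aₖ(1,0,…,0) ≠ 0. -/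
open MvPolynomial

noncomputable section

/-- Dehomogenization with respect to `x₀`: substitute `x₀ = 1`, `xᵢ = yᵢ`. -/
def deh (n : ℕ) : MvPolynomial (Fin (n + 1)) ℂ →ₐ[ℂ] MvPolynomial (Fin n) ℂ :=
  aeval (fun i => Fin.cases 1 (fun j => X j) i)

/-- The point `(1:0:⋯:0)`. -/
def pt (n : ℕ) : Fin (n + 1) → ℂ := fun i => if i = 0 then 1 else 0

/-- Saito's local condition at the origin: `g` lies in the ideal generated by its partial
derivatives in the localization of `ℂ[y₁,…,yₙ]` at the maximal ideal `(y₁,…,yₙ)`;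
equivalently, `u·g ∈ (g₁,…,gₙ)` for some polynomial `u` with `u(0) ≠ 0`. -/
def SaitoQH {n : ℕ} (g : MvPolynomial (Fin n) ℂ) : Prop :=
  ∃ u : MvPolynomial (Fin n) ℂ, eval (0 : Fin n → ℂ) u ≠ 0 ∧
    u * g ∈ Ideal.span (Set.range fun j : Fin n => pderiv j g)

namespace Aux

variable {σ : Type*}

lemma aeval_eq_eval (y : σ → ℂ) (p : MvPolynomial σ ℂ) :
    aeval y p = eval y p := by
  rw [← coe_aeval_eq_eval]; rfl

lemma sum_univ_eq_degree [Fintype σ] (s : σ →₀ ℕ) :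
    ∑ i, s i = Finsupp.degree s := by
  refine (Finset.sum_subset (Finset.subset_univ _) fun i _ hi => ?_).symm
  exact Finsupp.notMem_support_iff.mp hi

lemma single_add_sub [DecidableEq σ] (s : σ →₀ ℕ) (i : σ) (h : s i ≠ 0) :
    Finsupp.single i 1 + (s - Finsupp.single i 1) = s := by
  ext j
  simp only [Finsupp.add_apply, Finsupp.tsub_apply, Finsupp.single_apply]
  by_cases hj : i = j
  · subst hj; simp; omega
  · simp [hj]

lemma euler_monomial [Fintype σ] [DecidableEq σ] (s : σ →₀ ℕ) (c : ℂ) :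
    ∑ i, X i * pderiv i (monomial s c) = (Finsupp.degree s) • monomial s c := by
  have h : ∀ i : σ, X i * pderiv i (monomial s c) = (s i) • monomial s c := by
    intro i
    rw [pderiv_monomial]
    by_cases h : s i = 0
    · simp [h]
    · rw [X, monomial_mul, one_mul, single_add_sub s i h, mul_comm c (s i : ℂ)]
      simp [Nat.smul_one_eq_cast, smul_monomial, nsmul_eq_mul]
  simp only [h]
  rw [← Finset.sum_smul, sum_univ_eq_degree]

lemma mem_support_degree {f : MvPolynomial σ ℂ} {d : ℕ} (hf : f.IsHomogeneous d)
    {s : σ →₀ ℕ} (hs : s ∈ f.support) : Finsupp.degree s = d := by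
  by_contra h
  exact mem_support_iff.mp hs (hf.coeff_eq_zero h)

lemma euler [Fintype σ] [DecidableEq σ] {f : MvPolynomial σ ℂ} {d : ℕ}
    (hf : f.IsHomogeneous d) : ∑ i, X i * pderiv i f = (d : ℂ) • f := by
  conv_lhs => rw [f.as_sum]
  conv_rhs => rw [f.as_sum]
  simp only [map_sum, Finset.mul_sum]
  rw [Finset.sum_comm, Finset.smul_sum]
  refine Finset.sum_congr rfl fun s hs => ?_
  rw [euler_monomial, mem_support_degree hf hs]
  simp [Nat.smul_one_eq_cast, smul_monomial]

lemma isHomogeneous_pderiv [Fintype σ] [DecidableEq σ] {f : MvPolynomial σ ℂ} {d : ℕ}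
    (hf : f.IsHomogeneous d) (i : σ) : (pderiv i f).IsHomogeneous (d - 1) := by
  conv => enter [1]; rw [f.as_sum]
  rw [map_sum]
  refine IsHomogeneous.sum _ _ _ fun s hs => ?_
  rw [pderiv_monomial]
  by_cases h : s i = 0
  · rw [h]; simp only [Nat.cast_zero, mul_zero, monomial_zero]
    exact isHomogeneous_zero _ _ _
  · refine isHomogeneous_monomial _ ?_
    have h1 : Finsupp.degree s = d := mem_support_degree hf hs
    have h2 : Finsupp.single i 1 + (s - Finsupp.single i 1) = s := single_add_sub s i h
    have h3 : ∑ j, s j = ∑ j, (Finsupp.single i 1 : σ →₀ ℕ) j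
        + ∑ j, ((s - Finsupp.single i 1 : σ →₀ ℕ)) j := by
      rw [← Finset.sum_add_distrib]
      exact Finset.sum_congr rfl fun j _ => by
        conv_lhs => rw [← h2]
        rfl
  -- ∑ single = 1
    have h4 : ∑ j, (Finsupp.single i 1 : σ →₀ ℕ) j = 1 := by
      simp [Finsupp.single_apply]
    rw [← sum_univ_eq_degree]
    rw [← sum_univ_eq_degree] at h1
    omega

lemma eval_smul_of_isHomogeneous [Fintype σ] {f : MvPolynomial σ ℂ} {d : ℕ}
    (hf : f.IsHomogeneous d) (a : ℂ) (v : σ → ℂ) :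
    eval (a • v) f = a ^ d * eval v f := by
  rw [eval_eq', eval_eq', Finset.mul_sum]
  refine Finset.sum_congr rfl fun s hs => ?_
  have hdeg : ∑ i, s i = d := by rw [sum_univ_eq_degree]; exact mem_support_degree hf hs
  have : ∀ i : σ, (a • v) i ^ s i = a ^ s i * v i ^ s i := fun i => by
    simp [Pi.smul_apply, smul_eq_mul, mul_pow]
  rw [Finset.prod_congr rfl fun i _ => this i, Finset.prod_mul_distrib,
    Finset.prod_pow_eq_pow_sum, hdeg]
  ring

end Aux

namespace Aux

variable {n : ℕ}

lemma deh_X_zero : deh n (X 0) = 1 := by simp [deh]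

lemma deh_X_succ (j : Fin n) : deh n (X j.succ) = X j := by simp [deh]

lemma deh_pderiv (f : MvPolynomial (Fin (n + 1)) ℂ) (j : Fin n) :
    pderiv j (deh n f) = deh n (pderiv j.succ f) := by
  induction f using MvPolynomial.induction_on with
  | C a => simp
  | add p q hp hq => simp only [map_add, hp, hq]
  | mul_X p i hp =>
    rw [map_mul, pderiv_mul, pderiv_mul, map_add, map_mul, map_mul, hp]
    congr 1
    cases i using Fin.cases with
    | zero =>
      rw [deh_X_zero, pderiv_one, pderiv_X_of_ne (Fin.succ_ne_zero j).symm]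
      simp
    | succ i =>
      rw [deh_X_succ]
      by_cases h : i = j
      · subst h
        rw [pderiv_X_self, pderiv_X_self]
        simp
      · rw [pderiv_X_of_ne (fun hh => h (Fin.succ_injective _ hh)),
          pderiv_X_of_ne h]
        simp

lemma eval_cases (y : Fin n → ℂ) (P : MvPolynomial (Fin (n + 1)) ℂ) :
    eval (Fin.cases 1 y : Fin (n + 1) → ℂ) P = eval y (deh n P) := by
  rw [← aeval_eq_eval, ← aeval_eq_eval y, deh, comp_aeval_apply]
  have h : (fun i => (aeval y : MvPolynomial (Fin n) ℂ →ₐ[ℂ] ℂ)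
      ((fun i => Fin.cases 1 (fun j => X j) i : Fin (n+1) → MvPolynomial (Fin n) ℂ) i))
      = (Fin.cases 1 y : Fin (n + 1) → ℂ) := by
    funext i
    cases i using Fin.cases with
    | zero => simp
    | succ i => simp
  rw [h]

lemma pt_eq_cases : pt n = (Fin.cases 1 (fun _ => (0 : ℂ)) : Fin (n + 1) → ℂ) := by
  funext i
  cases i using Fin.cases with
  | zero => simp [pt]
  | succ i => simp [pt, Fin.succ_ne_zero]

lemma eval_pt (P : MvPolynomial (Fin (n + 1)) ℂ) :
    eval (pt n) P = eval (0 : Fin n → ℂ) (deh n P) := by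
  rw [pt_eq_cases]
  exact eval_cases _ _

lemma pderiv_comm' {σ : Type*} [DecidableEq σ] (i j : σ) (p : MvPolynomial σ ℂ) :
    pderiv i (pderiv j p) = pderiv j (pderiv i p) := by
  have hXc : ∀ a b : σ, ∃ c : ℂ, pderiv a (X b : MvPolynomial σ ℂ) = C c := by
    intro a b
    by_cases h : b = a
    · subst h; exact ⟨1, by simp⟩
    · exact ⟨0, by simp [pderiv_X_of_ne h]⟩
  induction p using MvPolynomial.induction_on with
  | C a => simp
  | add p q hp hq => simp only [map_add, hp, hq]
  | mul_X p k hp =>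
    obtain ⟨c₁, hc₁⟩ := hXc j k
    obtain ⟨c₂, hc₂⟩ := hXc i k
    simp only [pderiv_mul, hc₁, hc₂, map_add, pderiv_mul, pderiv_C, hp]
    ring

end Aux

namespace Aux

variable {n : ℕ}

/-- Homogenization to degree `N` (lifting variables by `Fin.succ`). -/
def hmg (N : ℕ) (q : MvPolynomial (Fin n) ℂ) : MvPolynomial (Fin (n + 1)) ℂ :=
  ∑ k ∈ Finset.range (N + 1), (X 0) ^ (N - k) * homogeneousComponent k (rename Fin.succ q)

lemma hmg_isHomogeneous (N : ℕ) (q : MvPolynomial (Fin n) ℂ) :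
    (hmg N q).IsHomogeneous N := by
  refine IsHomogeneous.sum _ _ _ fun k hk => ?_
  have h1 := isHomogeneous_X_pow (R := ℂ) (0 : Fin (n + 1)) (N - k)
  have h2 := homogeneousComponent_isHomogeneous (n := k) (φ := rename Fin.succ q)
  have h3 := h1.mul h2
  rwa [Nat.sub_add_cancel (Nat.lt_succ_iff.mp (Finset.mem_range.mp hk))] at h3

lemma deh_hmg {N : ℕ} {q : MvPolynomial (Fin n) ℂ} (hN : q.totalDegree ≤ N) :
    deh n (hmg N q) = q := by
  have htd : (rename Fin.succ q).totalDegree ≤ N :=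
    le_trans (totalDegree_rename_le _ _) hN
  rw [hmg, map_sum]
  have hterm : ∀ k ∈ Finset.range (N + 1),
      deh n ((X (0 : Fin (n + 1))) ^ (N - k) * homogeneousComponent k (rename Fin.succ q))
      = deh n (homogeneousComponent k (rename Fin.succ q)) := by
    intro k _
    rw [map_mul, map_pow, deh_X_zero, one_pow, one_mul]
  rw [Finset.sum_congr rfl hterm, ← map_sum]
  have hsum : ∑ k ∈ Finset.range (N + 1), homogeneousComponent k (rename Fin.succ q)
      = rename Fin.succ q := by
    rw [← Finset.sum_subset (Finset.range_subset_range.mpr (by omega :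
        (rename Fin.succ q).totalDegree + 1 ≤ N + 1))
        (fun k _ hk => homogeneousComponent_eq_zero k _ (by
          rw [Finset.mem_range, not_lt] at hk
          omega))]
    exact sum_homogeneousComponent _
  rw [hsum, deh, aeval_rename]
  have hX : ((fun i => Fin.cases 1 (fun j => X j) i :
      Fin (n + 1) → MvPolynomial (Fin n) ℂ) ∘ Fin.succ) = X := by
    funext j; simp
  rw [hX, aeval_X_left_apply]

lemma eq_zero_of_deh {P : MvPolynomial (Fin (n + 1)) ℂ} {m : ℕ}
    (hP : P.IsHomogeneous m) (h : deh n P = 0) : P = 0 := by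
  have hall : ∀ z : Fin (n + 1) → ℂ, eval z (X 0 * P) = 0 := by
    intro z
    by_cases h0 : z 0 = 0
    · rw [map_mul, eval_X, h0, zero_mul]
    · have hz : z = z 0 • (Fin.cases 1 (fun j => z j.succ / z 0) : Fin (n + 1) → ℂ) := by
        funext i
        cases i using Fin.cases with
        | zero => simp
        | succ i =>
          simp only [Pi.smul_apply, Fin.cases_succ, smul_eq_mul]
          field_simp
      rw [map_mul]
      conv_lhs => rw [hz, eval_smul_of_isHomogeneous hP _ _]
      rw [eval_cases, h, map_zero, mul_zero, mul_zero]
  have hXP : (X 0 : MvPolynomial (Fin (n + 1)) ℂ) * P = 0 := by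
    apply MvPolynomial.funext
    intro x
    rw [hall x, map_zero]
  rcases mul_eq_zero.mp hXP with h1 | h1
  · exact absurd h1 (X_ne_zero 0)
  · exact h1

lemma saito_to_syzygy {f : MvPolynomial (Fin (n + 1)) ℂ} {d : ℕ} (hf : f.IsHomogeneous d)
    (hd : d ≠ 0) (hs : SaitoQH (deh n f)) :
    ∃ A : Fin (n + 1) → MvPolynomial (Fin (n + 1)) ℂ,
      (∑ i, A i * pderiv i f = 0) ∧ ∃ k, eval (pt n) (A k) ≠ 0 := by
  obtain ⟨u, hu0, humem⟩ := hs
  rw [Ideal.mem_span_range_iff_exists_fun] at humem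
  obtain ⟨b, hb⟩ := humem
  set N := max u.totalDegree (Finset.univ.sup fun j : Fin n => (b j).totalDegree) with hN
  set U := hmg (n := n) N u with hU
  set B := fun j : Fin n => hmg (n := n) (N + 1) (b j) with hB
  have hdU : deh n U = u := deh_hmg (le_max_left _ _)
  have hdB : ∀ j, deh n (B j) = b j := by
    intro j
    refine deh_hmg ?_
    have h1 : (b j).totalDegree ≤ Finset.univ.sup fun j : Fin n => (b j).totalDegree :=
      Finset.le_sup (f := fun j : Fin n => (b j).totalDegree) (Finset.mem_univ j)
    have h2 := le_max_right u.totalDegree (Finset.univ.sup fun j : Fin n => (b j).totalDegree)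
    omega
  have hkey : U * f = ∑ j : Fin n, B j * pderiv j.succ f := by
    have hhom : (U * f - ∑ j : Fin n, B j * pderiv j.succ f).IsHomogeneous (N + d) := by
      refine ((hmg_isHomogeneous N u).mul hf).sub (IsHomogeneous.sum _ _ _ fun j _ => ?_)
      have h5 := (hmg_isHomogeneous (n := n) (N + 1) (b j)).mul
        (isHomogeneous_pderiv hf j.succ)
      have h6 : (N + 1) + (d - 1) = N + d := by omega
      rwa [h6] at h5
    have hdeh : deh n (U * f - ∑ j : Fin n, B j * pderiv j.succ f) = 0 := by
      rw [map_sub, map_mul, hdU, map_sum]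
      have hterm : ∀ j ∈ Finset.univ, deh n (B j * pderiv j.succ f)
          = b j * pderiv j (deh n f) := by
        intro j _
        rw [map_mul, hdB, deh_pderiv]
      rw [Finset.sum_congr rfl hterm, hb, sub_self]
    exact sub_eq_zero.mp (eq_zero_of_deh hhom hdeh)
  refine ⟨Fin.cases (U * X 0) (fun j => U * X j.succ - (d : ℂ) • B j), ?_, 0, ?_⟩
  · rw [Fin.sum_univ_succ]
    simp only [Fin.cases_zero, Fin.cases_succ, sub_mul]
    rw [Finset.sum_sub_distrib]
    have h7 : (U * X 0) * pderiv 0 f + ∑ j : Fin n, (U * X j.succ) * pderiv j.succ f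
        = U * ∑ i, X i * pderiv i f := by
      rw [Finset.mul_sum, Fin.sum_univ_succ]
      ring_nf
    have h8 : ∑ j : Fin n, ((d : ℂ) • B j) * pderiv j.succ f
        = (d : ℂ) • (U * f) := by
      rw [hkey, Finset.smul_sum]
      exact Finset.sum_congr rfl fun j _ => (smul_mul_assoc _ _ _)
    rw [← add_sub_assoc, h7, h8, euler hf, mul_smul_comm, sub_self]
  · simp only [Fin.cases_zero]
    rw [eval_pt, map_mul, hdU, deh_X_zero, map_mul, map_one, mul_one]
    exact hu0

end Aux

namespace Aux

variable {n : ℕ}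

/-- The derivation `a ↦ ∑ⱼ wⱼ ∂ⱼa`. -/
def Dop (w : Fin n → MvPolynomial (Fin n) ℂ) (a : MvPolynomial (Fin n) ℂ) :
    MvPolynomial (Fin n) ℂ :=
  ∑ j, w j * pderiv j a

lemma Dop_mul (w : Fin n → MvPolynomial (Fin n) ℂ) (a b : MvPolynomial (Fin n) ℂ) :
    Dop w (a * b) = Dop w a * b + a * Dop w b := by
  unfold Dop
  rw [Finset.sum_mul, Finset.mul_sum, ← Finset.sum_add_distrib]
  refine Finset.sum_congr rfl fun j _ => ?_
  rw [pderiv_mul]; ring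

lemma Dop_pow (w : Fin n → MvPolynomial (Fin n) ℂ) (a : MvPolynomial (Fin n) ℂ) (m : ℕ) :
    Dop w (a ^ m) = (m : MvPolynomial (Fin n) ℂ) * a ^ (m - 1) * Dop w a := by
  unfold Dop
  rw [Finset.mul_sum]
  refine Finset.sum_congr rfl fun j _ => ?_
  rw [pderiv_pow]; ring

lemma Dop_X (w : Fin n → MvPolynomial (Fin n) ℂ) (i : Fin n) : Dop w (X i) = w i := by
  unfold Dop
  rw [Finset.sum_eq_single i]
  · rw [pderiv_X_self, mul_one]
  · intro b _ hb
    rw [pderiv_X_of_ne (Ne.symm hb), mul_zero]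
  · intro h; exact absurd (Finset.mem_univ i) h

lemma Dop_ideal {w : Fin n → MvPolynomial (Fin n) ℂ} {S : Set (MvPolynomial (Fin n) ℂ)}
    (hS : ∀ x ∈ S, Dop w x ∈ Ideal.span S) :
    ∀ a ∈ Ideal.span S, Dop w a ∈ Ideal.span S := by
  intro a ha
  refine Submodule.span_induction (p := fun x _ => Dop w x ∈ Ideal.span S)
    (fun x hx => hS x hx) ?_ ?_ ?_ ha
  · show Dop w 0 ∈ Ideal.span S
    have h0 : Dop w (0 : MvPolynomial (Fin n) ℂ) = 0 := by simp [Dop]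
    rw [h0]; exact Ideal.zero_mem _
  · intro x y _ _ hx hy
    show Dop w (x + y) ∈ Ideal.span S
    have hadd : Dop w (x + y) = Dop w x + Dop w y := by
      simp [Dop, mul_add, Finset.sum_add_distrib]
    rw [hadd]
    exact Ideal.add_mem _ hx hy
  · intro c x hxI hx
    show Dop w (c • x) ∈ Ideal.span S
    have hx' : Dop w x ∈ Ideal.span S := hx
    have hE : c • x = c * x := rfl
    rw [hE, Dop_mul]
    exact Ideal.add_mem _ (Ideal.mul_mem_left _ _ hxI) (Ideal.mul_mem_left _ _ hx')

lemma Dop_radical {w : Fin n → MvPolynomial (Fin n) ℂ} {S : Set (MvPolynomial (Fin n) ℂ)}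
    (hS : ∀ x ∈ S, Dop w x ∈ Ideal.span S) {a : MvPolynomial (Fin n) ℂ}
    (ha : a ∈ (Ideal.span S).radical) : Dop w a ∈ (Ideal.span S).radical := by
  set I := Ideal.span S with hI
  have hD : ∀ b ∈ I, Dop w b ∈ I := Dop_ideal hS
  obtain ⟨m, hm⟩ := ha
  rcases Nat.eq_zero_or_pos m with hm0 | hmpos
  · subst hm0
    rw [pow_zero] at hm
    exact ⟨1, by rw [pow_one]; exact (Ideal.eq_top_iff_one I).mpr hm ▸ Submodule.mem_top⟩
  · have claim : ∀ k, k ≤ m → a ^ (m - k) * (Dop w a) ^ (2 * k) ∈ I := by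
      intro k
      induction k with
      | zero => intro _; simpa using hm
      | succ k ih =>
        intro hk1
        have hIH := ih (by omega)
        have hmk : m - k = (m - (k + 1)) + 1 := by omega
        set q := m - (k + 1) with hq
        rw [hmk] at hIH
        have hT := hD _ hIH
        rw [Dop_mul, Dop_pow, Nat.add_sub_cancel] at hT
        have hT2 := Ideal.mul_mem_left I (Dop w a) hT
        set W := Dop w ((Dop w a) ^ (2 * k)) with hW
        have hsecond : Dop w a * (a ^ (q + 1) * W) ∈ I := by
          rcases Nat.eq_zero_or_pos k with hk0 | hkpos
          · have hW0 : W = 0 := by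
              rw [hW, hk0, mul_zero, pow_zero, Dop]
              simp
            rw [hW0, mul_zero, mul_zero]
            exact Ideal.zero_mem _
          · have hWeq : W = (2 * k : MvPolynomial (Fin n) ℂ) * (Dop w a) ^ (2 * k - 1)
                * Dop w (Dop w a) := by
              rw [hW, Dop_pow]; push_cast; ring
            have hrw : Dop w a * (a ^ (q + 1) * W)
                = ((2 * k : MvPolynomial (Fin n) ℂ) * Dop w (Dop w a))
                  * (a ^ (q + 1) * (Dop w a) ^ (2 * k)) := by
              rw [hWeq]
              have h2k : (Dop w a) ^ (2 * k - 1) * Dop w a = (Dop w a) ^ (2 * k) := by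
                rw [← pow_succ]
                congr 1
                omega
              calc Dop w a * (a ^ (q + 1) * ((2 * k : MvPolynomial (Fin n) ℂ)
                    * (Dop w a) ^ (2 * k - 1) * Dop w (Dop w a)))
                  = ((2 * k : MvPolynomial (Fin n) ℂ) * Dop w (Dop w a))
                    * (a ^ (q + 1) * ((Dop w a) ^ (2 * k - 1) * Dop w a)) := by ring
                _ = _ := by rw [h2k]
            rw [hrw]
            exact Ideal.mul_mem_left _ _ hIH
        have hmem : ((q + 1 : ℕ) : MvPolynomial (Fin n) ℂ)
            * (a ^ q * (Dop w a) ^ (2 * (k + 1))) ∈ I := by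
          have hsub := Ideal.sub_mem I hT2 hsecond
          convert hsub using 1
          push_cast
          ring
        have hC : ((q + 1 : ℕ) : MvPolynomial (Fin n) ℂ) = C ((q + 1 : ℕ) : ℂ) := by
          rw [map_natCast (C : ℂ →+* MvPolynomial (Fin n) ℂ)]
        have h9 := Ideal.mul_mem_left I (C (((q + 1 : ℕ) : ℂ))⁻¹) hmem
        rw [hC, ← mul_assoc, ← C_mul, inv_mul_cancel₀
          (Nat.cast_ne_zero.mpr (Nat.succ_ne_zero q)), C_1, one_mul] at h9
        exact h9
    have hfin := claim m le_rfl
    rw [Nat.sub_self, pow_zero, one_mul] at hfin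
    exact ⟨2 * m, hfin⟩

end Aux

namespace Aux

variable {n : ℕ}

lemma d_ne_zero {d : ℕ} {f : MvPolynomial (Fin (n + 1)) ℂ} (hn : 2 ≤ n)
    (hf : f.IsHomogeneous d)
    (hiso : {P : Projectivization ℂ (Fin (n + 1) → ℂ) |
      ∀ i, eval P.rep (pderiv i f) = 0}.Finite) : d ≠ 0 := by
  intro hd0
  subst hd0
  have htd : f.totalDegree = 0 := Nat.le_zero.mp hf.totalDegree_le
  rw [totalDegree_eq_zero_iff] at htd
  have hconst : ∀ i, pderiv i f = 0 := by
    intro i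
    rw [f.as_sum, map_sum]
    refine Finset.sum_eq_zero fun s hs => ?_
    rw [pderiv_monomial, htd s hs i]
    simp
  set i1 : Fin (n + 1) := ⟨1, by omega⟩ with hi1
  have hi10 : i1 ≠ 0 := by
    intro h
    have := congrArg Fin.val h
    simp [hi1] at this
  set v : ℂ → (Fin (n + 1) → ℂ) := fun c i => if i = i1 then c else if i = 0 then 1 else 0
    with hv
  have hv0 : ∀ c, v c ≠ 0 := by
    intro c h
    have := congrFun h 0
    simp [hv, Ne.symm hi10] at this
  have hva : ∀ c : ℂ, v c 0 = 1 := by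
    intro c
    rw [hv]
    simp [Ne.symm hi10]
  have hvb : ∀ c : ℂ, v c i1 = c := by
    intro c
    rw [hv]
    simp
  have hinj : Function.Injective fun c => Projectivization.mk ℂ (v c) (hv0 c) := by
    intro c c' h
    rw [Projectivization.mk_eq_mk_iff] at h
    obtain ⟨a, ha⟩ := h
    have h0 := congrFun ha 0
    have h1 := congrFun ha i1
    rw [Pi.smul_apply, hva, hva, Units.smul_def, smul_eq_mul, mul_one] at h0
    rw [Pi.smul_apply, hvb, hvb, Units.smul_def, smul_eq_mul, h0, one_mul] at h1
    exact h1.symm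
  have hmem : ∀ c : ℂ, (fun c => Projectivization.mk ℂ (v c) (hv0 c)) c ∈
      {P : Projectivization ℂ (Fin (n + 1) → ℂ) | ∀ i, eval P.rep (pderiv i f) = 0} := by
    intro c
    intro i
    rw [hconst i, map_zero]
  exact Set.infinite_of_injective_forall_mem hinj hmem hiso

lemma deh_pd0 {f : MvPolynomial (Fin (n + 1)) ℂ} {d : ℕ} (hf : f.IsHomogeneous d) :
    deh n (pderiv 0 f)
      = C (d : ℂ) * deh n f - ∑ j : Fin n, X j * pderiv j (deh n f) := by
  have he := congrArg (deh n) (euler hf)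
  rw [map_sum, map_smul, smul_eq_C_mul, Fin.sum_univ_succ] at he
  rw [map_mul, deh_X_zero, one_mul] at he
  have hterm : ∀ j ∈ Finset.univ, deh n (X (Fin.succ j) * pderiv j.succ f)
      = X j * pderiv j (deh n f) := by
    intro j _
    rw [map_mul, deh_X_succ, deh_pderiv]
  rw [Finset.sum_congr rfl hterm] at he
  exact eq_sub_of_add_eq he

lemma finite_zeroLocus {f : MvPolynomial (Fin (n + 1)) ℂ} {d : ℕ} (hf : f.IsHomogeneous d)
    (hiso : {P : Projectivization ℂ (Fin (n + 1) → ℂ) |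
      ∀ i, eval P.rep (pderiv i f) = 0}.Finite) :
    (MvPolynomial.zeroLocus ℂ (Ideal.span
      ({deh n f} ∪ Set.range fun j : Fin n => pderiv j (deh n f)))).Finite := by
  have hne : ∀ y : Fin n → ℂ, (Fin.cases 1 y : Fin (n + 1) → ℂ) ≠ 0 := by
    intro y h
    have := congrFun h 0
    simp at this
  set ψ : (Fin n → ℂ) → Projectivization ℂ (Fin (n + 1) → ℂ) :=
    fun y => Projectivization.mk ℂ (Fin.cases 1 y) (hne y) with hψ
  have hinj : Function.Injective ψ := by
    intro y y' h
    rw [hψ, Projectivization.mk_eq_mk_iff] at h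
    obtain ⟨a, ha⟩ := h
    have h0 := congrFun ha 0
    simp only [Pi.smul_apply, Fin.cases_zero, Units.smul_def, smul_eq_mul, mul_one] at h0
    funext j
    have hj := congrFun ha j.succ
    simp only [Pi.smul_apply, Fin.cases_succ, Units.smul_def, smul_eq_mul, h0, one_mul] at hj
    exact hj.symm
  have hsub : MvPolynomial.zeroLocus ℂ (Ideal.span
      ({deh n f} ∪ Set.range fun j : Fin n => pderiv j (deh n f)))
      ⊆ ψ ⁻¹' {P : Projectivization ℂ (Fin (n + 1) → ℂ) |
        ∀ i, eval P.rep (pderiv i f) = 0} := by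
    intro y hy
    have hyg : eval y (deh n f) = 0 :=
      hy _ (Ideal.subset_span (Set.mem_union_left _ rfl))
    have hyG : ∀ j : Fin n, eval y (pderiv j (deh n f)) = 0 := fun j =>
      hy _ (Ideal.subset_span (Set.mem_union_right _ ⟨j, rfl⟩))
    have hcases : ∀ i, eval (Fin.cases 1 y : Fin (n + 1) → ℂ) (pderiv i f) = 0 := by
      intro i
      rw [eval_cases]
      cases i using Fin.cases with
      | zero =>
        rw [deh_pd0 hf, map_sub, map_mul, hyg, map_sum]
        have hz : ∀ j ∈ Finset.univ, eval y (X j * pderiv j (deh n f)) = 0 := by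
          intro j _
          rw [map_mul, hyG, mul_zero]
        rw [Finset.sum_congr rfl hz]
        simp
      | succ j => rw [← deh_pderiv, hyG]
    intro i
    obtain ⟨a, ha⟩ := Projectivization.exists_smul_eq_mk_rep ℂ ((Fin.cases 1 y : Fin (n + 1) → ℂ)) (hne y)
    rw [hψ]
    show eval (Projectivization.mk ℂ ((Fin.cases 1 y : Fin (n + 1) → ℂ)) (hne y)).rep (pderiv i f) = 0
    rw [← ha, Units.smul_def, eval_smul_of_isHomogeneous (isHomogeneous_pderiv hf i),
      hcases i, mul_zero]
  exact (hiso.preimage hinj.injOn).subset hsub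

lemma wzero {w : Fin n → MvPolynomial (Fin n) ℂ} {S : Set (MvPolynomial (Fin n) ℂ)}
    (hfin : (MvPolynomial.zeroLocus ℂ (Ideal.span S)).Finite)
    (h0 : (0 : Fin n → ℂ) ∈ MvPolynomial.zeroLocus ℂ (Ideal.span S))
    (hDS : ∀ x ∈ S, Dop w x ∈ Ideal.span S) (i : Fin n) :
    eval (0 : Fin n → ℂ) (w i) = 0 := by
  classical
  set Z := hfin.toFinset with hZ
  have hsex : ∀ p ∈ Z.erase 0, ∃ q : MvPolynomial (Fin n) ℂ,
      eval (0 : Fin n → ℂ) q = 1 ∧ eval p q = 0 := by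
    intro p hp
    have hpne : p ≠ 0 := Finset.ne_of_mem_erase hp
    obtain ⟨i0, hi0⟩ : ∃ i0, p i0 ≠ 0 := by
      by_contra hc
      push_neg at hc
      exact hpne (funext hc)
    refine ⟨1 - C (p i0)⁻¹ * X i0, by simp, ?_⟩
    rw [map_sub, map_one, map_mul, eval_C, eval_X]
    field_simp
    exact sub_self 1
  choose q hq1 hq0 using hsex
  set s : MvPolynomial (Fin n) ℂ := ∏ p ∈ (Z.erase 0).attach, q p.1 p.2 with hs
  have hs1 : eval (0 : Fin n → ℂ) s = 1 := by
    rw [hs, map_prod]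
    exact Finset.prod_eq_one fun p _ => hq1 p.1 p.2
  have hsvanish : ∀ y ∈ MvPolynomial.zeroLocus ℂ (Ideal.span S), y ≠ 0 → eval y s = 0 := by
    intro y hy hyne
    have hyZ : y ∈ Z.erase 0 :=
      Finset.mem_erase.mpr ⟨hyne, hfin.mem_toFinset.mpr hy⟩
    rw [hs, map_prod]
    exact Finset.prod_eq_zero (Finset.mem_attach _ ⟨y, hyZ⟩) (hq0 y hyZ)
  have hXs : X i * s ∈ (Ideal.span S).radical := by
    rw [← vanishingIdeal_zeroLocus_eq_radical (K := ℂ), mem_vanishingIdeal_iff]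
    intro y hy
    rw [aeval_eq_eval, map_mul, eval_X]
    by_cases hy0 : y = 0
    · subst hy0; simp
    · rw [hsvanish y hy hy0, mul_zero]
  have hDrad := Dop_radical hDS hXs
  have h00 : eval (0 : Fin n → ℂ) (Dop w (X i * s)) = 0 := by
    rw [← vanishingIdeal_zeroLocus_eq_radical (K := ℂ), mem_vanishingIdeal_iff] at hDrad
    exact hDrad 0 h0
  rw [Dop_mul, Dop_X, map_add, map_mul, map_mul, hs1, eval_X] at h00
  simpa using h00

end Aux

/-- Theorem 3.1: for a hypersurface `V(f) ⊆ ℙⁿ` with only isolated singularities and singular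
point `p = (1:0:⋯:0)`, the singularity at `p` is quasi-homogeneous (Saito's condition for the
dehomogenization `g = f(1,y)`) iff some Jacobian syzygy of `f` has a component not vanishing
at `p`. -/
theorem stmt_0 (n d : ℕ) (hn : 2 ≤ n) (f : MvPolynomial (Fin (n + 1)) ℂ)
    (hf : f.IsHomogeneous d)
    (hiso : {P : Projectivization ℂ (Fin (n + 1) → ℂ) |
      ∀ i, eval P.rep (pderiv i f) = 0}.Finite)
    (hsing : ∀ i, eval (pt n) (pderiv i f) = 0) :
    SaitoQH (deh n f) ↔
      ∃ A : Fin (n + 1) → MvPolynomial (Fin (n + 1)) ℂ,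
        (∑ i, A i * pderiv i f = 0) ∧ ∃ k, eval (pt n) (A k) ≠ 0 := by
  have hd : d ≠ 0 := Aux.d_ne_zero hn hf hiso
  constructor
  · exact Aux.saito_to_syzygy hf hd
  · rintro ⟨A, hsyz, k, hk⟩
    -- dehomogenize the syzygy
    set g : MvPolynomial (Fin n) ℂ := deh n f with hg
    set w : Fin n → MvPolynomial (Fin n) ℂ :=
      fun j => deh n (A 0) * X j - deh n (A j.succ) with hw
    have hsyzd : deh n (A 0) * (C (d : ℂ) * g - ∑ j : Fin n, X j * pderiv j g)
        + ∑ j : Fin n, deh n (A j.succ) * pderiv j g = 0 := by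
      have h := congrArg (deh n) hsyz
      rw [map_sum, map_zero, Fin.sum_univ_succ, map_mul] at h
      have hterm : ∀ j ∈ Finset.univ,
          deh n (A (Fin.succ j) * pderiv j.succ f) = deh n (A j.succ) * pderiv j g := by
        intro j _
        rw [map_mul, Aux.deh_pderiv]
      rw [Finset.sum_congr rfl hterm, Aux.deh_pd0 hf] at h
      exact h
    have hrel : ∑ j : Fin n, w j * pderiv j g = C (d : ℂ) * (deh n (A 0) * g) := by
      have h4 : ∀ j ∈ Finset.univ, w j * pderiv j g
          = deh n (A 0) * (X j * pderiv j g) - deh n (A j.succ) * pderiv j g := by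
        intro j _
        rw [hw]
        ring
      rw [Finset.sum_congr rfl h4, Finset.sum_sub_distrib, ← Finset.mul_sum]
      linear_combination -hsyzd
    rcases Fin.eq_zero_or_eq_succ k with hk0 | ⟨j, hkj⟩
    · -- easy case: the syzygy component at x₀ does not vanish
      refine ⟨C (d : ℂ) * deh n (A 0), ?_, ?_⟩
      · rw [map_mul, eval_C, ← Aux.eval_pt]
        refine mul_ne_zero (by exact_mod_cast hd) ?_
        rw [← hk0]
        exact hk
      · rw [Ideal.mem_span_range_iff_exists_fun]
        exact ⟨w, by rw [hrel]; ring⟩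
    · -- hard case: contradiction with isolated singularities
      exfalso
      set S : Set (MvPolynomial (Fin n) ℂ) :=
        {g} ∪ Set.range fun j : Fin n => pderiv j g with hS
      have hgmem : g ∈ Ideal.span S :=
        Ideal.subset_span (Set.mem_union_left _ rfl)
      have hGmem : ∀ j0 : Fin n, pderiv j0 g ∈ Ideal.span S := fun j0 =>
        Ideal.subset_span (Set.mem_union_right _ ⟨j0, rfl⟩)
      have hDS : ∀ x ∈ S, Aux.Dop w x ∈ Ideal.span S := by
        rintro x (hx | ⟨j0, rfl⟩)
        · rw [Set.mem_singleton_iff] at hx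
          rw [hx]
          have hDg : Aux.Dop w g = C (d : ℂ) * (deh n (A 0) * g) := hrel
          rw [hDg]
          exact Ideal.mul_mem_left _ _ (Ideal.mul_mem_left _ _ hgmem)
        · have hcomm : Aux.Dop w (pderiv j0 g)
              = pderiv j0 (∑ i' : Fin n, w i' * pderiv i' g)
                - ∑ i' : Fin n, pderiv j0 (w i') * pderiv i' g := by
            rw [map_sum, ← Finset.sum_sub_distrib]
            unfold Aux.Dop
            refine Finset.sum_congr rfl fun i' _ => ?_
            rw [pderiv_mul, Aux.pderiv_comm' i' j0]
            ring
          rw [hrel, pderiv_C_mul, pderiv_mul] at hcomm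
          rw [hcomm]
          refine Ideal.sub_mem _ ?_ ?_
          · refine Ideal.mul_mem_left _ _ (Ideal.add_mem _ ?_ ?_)
            · exact Ideal.mul_mem_left _ _ hgmem
            · exact Ideal.mul_mem_left _ _ (hGmem j0)
          · exact Ideal.sum_mem _ fun i' _ => Ideal.mul_mem_left _ _ (hGmem i')
      have hf0 : eval (pt n) f = 0 := by
        have he := congrArg (eval (pt n)) (Aux.euler hf)
        have hz : ∀ i ∈ Finset.univ, eval (pt n) (X i * pderiv i f) = 0 := by
          intro i _
          rw [map_mul, hsing i, mul_zero]
        rw [map_sum, Finset.sum_congr rfl hz, Finset.sum_const_zero, smul_eq_C_mul,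
          map_mul, eval_C] at he
        rcases mul_eq_zero.mp he.symm with h | h
        · exact absurd h (by exact_mod_cast hd)
        · exact h
      have h0mem : (0 : Fin n → ℂ) ∈ MvPolynomial.zeroLocus ℂ (Ideal.span S) := by
        rw [MvPolynomial.mem_zeroLocus_iff]
        have hle : Ideal.span S ≤ RingHom.ker (eval (0 : Fin n → ℂ)) := by
          rw [Ideal.span_le]
          rintro x (hx | ⟨j0, rfl⟩)
          · rw [Set.mem_singleton_iff] at hx
            rw [SetLike.mem_coe, RingHom.mem_ker, hx]
            show eval (0 : Fin n → ℂ) (deh n f) = 0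
            rw [← Aux.eval_pt]
            exact hf0
          · rw [SetLike.mem_coe, RingHom.mem_ker]
            show eval (0 : Fin n → ℂ) (pderiv j0 (deh n f)) = 0
            rw [Aux.deh_pderiv, ← Aux.eval_pt]
            exact hsing j0.succ
        intro p hp
        exact RingHom.mem_ker.mp (hle hp)
      have hfin : (MvPolynomial.zeroLocus ℂ (Ideal.span S)).Finite := by
        rw [hS, hg]
        exact Aux.finite_zeroLocus hf hiso
      have hw0 := Aux.wzero hfin h0mem hDS j
      rw [hw, map_sub, map_mul, eval_X, Pi.zero_apply, mul_zero, zero_sub, neg_eq_zero,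
        ← Aux.eval_pt, ← hkj] at hw0
      exact hk hw0
end
end

section
/- Let n ≥ 2 and let f ∈ ℂ[x₀,…,xₙ] be homogeneous of degree d such that V = V(f) ⊆ ℙⁿ has only isolated singularities, and let p = (1:0:⋯:0) be a singular point of V. Let ρ₁,…,ρ_m ∈ R^{n+1} be a system of generators of the R-module Syz(J_f) of Jacobian syzygies of f, and let M_f be the (n+1)×m matrix over R whose j-th column is ρⱼ. Set g(y₁,…,yₙ) = f(1,y₁,…,yₙ). Then g belongs to the ideal (g₁,…,gₙ) in the localization of ℂ[y₁,…,yₙ] at the maximal ideal (y₁,…,yₙ) if and only if the complex matrix M_f(p), obtained by evaluating every entry of M_f at (1,0,…,0), is nonzero (equivalently, has rank ≥ 1; equivalently, some generator ρⱼ has an entry not vanishing at p). -/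
open MvPolynomial

set_option linter.unusedSectionVars false
set_option maxHeartbeats 1000000

noncomputable section

namespace Helper

section Generic

variable {σ : Type*} [Fintype σ] [DecidableEq σ]



lemma euler_monomial (s : σ →₀ ℕ) (a : ℂ) :
    ∑ i, X i * pderiv i (monomial s a) = (s.degree : ℂ) • monomial s a := by
  have key : ∀ i : σ, X i * pderiv i (monomial s a) = ((s i : ℂ)) • monomial s a := by
    intro i
    rw [pderiv_monomial]
    rcases Nat.eq_zero_or_pos (s i) with h | h
    · simp [h]
    · have hs : (s - Finsupp.single i 1) + Finsupp.single i 1 = s := by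
        ext j
        rcases eq_or_ne j i with rfl | hj
        · simp [Finsupp.single_apply]; omega
        · simp [Finsupp.single_apply, hj.symm, Ne.symm hj]
      rw [X, monomial_mul, one_mul, add_comm, hs, smul_monomial]
      congr 1
      rw [smul_eq_mul, mul_comm]
  rw [Finset.sum_congr rfl fun i _ => key i, ← Finset.sum_smul]
  congr 1
  rw [Finsupp.degree_apply]
  push_cast
  rw [Finset.sum_subset (Finset.subset_univ s.support)]
  intro x _ hx
  simp [Finsupp.notMem_support_iff.mp hx]

lemma euler {f : MvPolynomial σ ℂ} {d : ℕ} (hf : f.IsHomogeneous d) :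
    ∑ i, X i * pderiv i f = (d : ℂ) • f := by
  conv_lhs => rw [f.as_sum]
  conv_rhs => rw [f.as_sum]
  rw [Finset.smul_sum]
  simp only [map_sum, Finset.mul_sum]
  rw [Finset.sum_comm]
  refine Finset.sum_congr rfl fun s hs => ?_
  rw [euler_monomial]
  congr 2
  have := hf (mem_support_iff.mp hs)
  rw [show (1 : σ → ℕ) = fun _ => 1 from rfl, ← Finsupp.degree_eq_weight_one] at this
  exact this


end Generic

section Deh





lemma sub_single_add {s : σ →₀ ℕ} {i : σ} (h : 0 < s i) :
    (s - Finsupp.single i 1) + Finsupp.single i 1 = s := by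
  ext j
  rcases eq_or_ne j i with rfl | hj
  · simp [Finsupp.single_apply]; omega
  · simp [Finsupp.single_apply, hj.symm, Ne.symm hj]

lemma degree_sub_single {s : σ →₀ ℕ} {i : σ} (h : 0 < s i) :
    (s - Finsupp.single i 1).degree = s.degree - 1 := by
  have hs := congrArg (Finsupp.weight (fun _ => 1 : σ → ℕ)) (sub_single_add h)
  rw [map_add] at hs
  have h1 : (Finsupp.weight (fun _ => 1 : σ → ℕ)) (Finsupp.single i 1) = 1 := by
    simp [Finsupp.weight_apply]
  rw [DFunLike.congr_fun Finsupp.degree_eq_weight_one (s - Finsupp.single i 1),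
    DFunLike.congr_fun Finsupp.degree_eq_weight_one s]
  omega

lemma pderiv_isHomogeneous {f : MvPolynomial σ ℂ} {d : ℕ} (hf : f.IsHomogeneous d) (i : σ) :
    (pderiv i f).IsHomogeneous (d - 1) := by
  conv_lhs => rw [f.as_sum]
  rw [map_sum]
  apply MvPolynomial.IsHomogeneous.sum
  intro s hs
  have hd : s.degree = d := by
    have := hf (mem_support_iff.mp hs)
    rwa [show (1 : σ → ℕ) = fun _ => 1 from rfl, ← Finsupp.degree_eq_weight_one] at this
  rw [pderiv_monomial]
  rcases Nat.eq_zero_or_pos (s i) with h | h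
  · simp only [h, Nat.cast_zero, mul_zero, monomial_zero]
    exact isHomogeneous_zero _ _ _
  · exact isHomogeneous_monomial _ (by rw [degree_sub_single h, hd])

lemma eval_smul_of_isHomogeneous {f : MvPolynomial σ ℂ} {d : ℕ} (hf : f.IsHomogeneous d)
    (c : ℂ) (x : σ → ℂ) : eval (c • x) f = c ^ d * eval x f := by
  conv_lhs => rw [f.as_sum]
  conv_rhs => rw [f.as_sum]
  rw [map_sum, map_sum, Finset.mul_sum]
  refine Finset.sum_congr rfl fun s hs => ?_
  have hd : s.degree = d := by
    have := hf (mem_support_iff.mp hs)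
    rwa [show (1 : σ → ℕ) = fun _ => 1 from rfl, ← Finsupp.degree_eq_weight_one] at this
  rw [eval_monomial, eval_monomial]
  rw [Finsupp.prod, Finsupp.prod]
  have : ∀ j ∈ s.support, (c • x) j ^ s j = c ^ s j * x j ^ s j := by
    intro j _
    rw [Pi.smul_apply, smul_eq_mul, mul_pow]
  rw [Finset.prod_congr rfl this, Finset.prod_mul_distrib, Finset.prod_pow_eq_pow_sum]
  rw [show ∑ j ∈ s.support, s j = d from hd ▸ rfl]
  ring

lemma pderiv_comm (i j : σ) (P : MvPolynomial σ ℂ) :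
    pderiv i (pderiv j P) = pderiv j (pderiv i P) := by
  induction P using MvPolynomial.induction_on with
  | C a => simp
  | add p q hp hq => simp [hp, hq]
  | mul_X p k ih =>
    simp only [pderiv_mul, map_add, pderiv_mul, ih]
    rcases eq_or_ne k i with rfl | hki <;> rcases eq_or_ne k j with rfl | hkj <;>
      simp [pderiv_X_self, pderiv_X_of_ne, *] <;> ring


lemma deh_X_zero {n : ℕ} : deh n (X 0) = 1 := by simp [deh]

lemma deh_X_succ {n : ℕ} (j : Fin n) : deh n (X j.succ) = X j := by simp [deh]

lemma pderiv_deh {n : ℕ} (P : MvPolynomial (Fin (n+1)) ℂ) (j : Fin n) :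
    pderiv j (deh n P) = deh n (pderiv j.succ P) := by
  induction P using MvPolynomial.induction_on with
  | C a => simp [deh]
  | add p q hp hq => simp [map_add, hp, hq]
  | mul_X p i ih =>
    rw [map_mul, pderiv_mul, pderiv_mul, map_add, map_mul, map_mul, ih]
    congr 1
    induction i using Fin.cases with
    | zero =>
      simp [deh_X_zero, pderiv_X_of_ne (Fin.succ_ne_zero j).symm]
    | succ k =>
      rcases eq_or_ne k j with rfl | hkj
      · simp [deh_X_succ, pderiv_X_self]
      · have h1 : pderiv j (X k : MvPolynomial (Fin n) ℂ) = 0 := pderiv_X_of_ne hkj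
        have h2 : pderiv j.succ (X k.succ : MvPolynomial (Fin (n+1)) ℂ) = 0 :=
          pderiv_X_of_ne (fun h => hkj (Fin.succ_injective _ h))
        simp [deh_X_succ, h1, h2]

lemma eval_deh {n : ℕ} (w : Fin n → ℂ) (P : MvPolynomial (Fin (n+1)) ℂ) :
    eval w (deh n P) = eval (Fin.cases 1 w) P := by
  induction P using MvPolynomial.induction_on with
  | C a => simp [deh]
  | add p q hp hq => simp [map_add, hp, hq]
  | mul_X p i ih =>
    rw [map_mul, map_mul, map_mul, ih]
    congr 1
    induction i using Fin.cases with
    | zero => rw [deh_X_zero, eval_X, map_one, Fin.cases_zero]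
    | succ k => rw [deh_X_succ, eval_X, eval_X, Fin.cases_succ]

lemma pt_eq (n : ℕ) : pt n = Fin.cases 1 (0 : Fin n → ℂ) := by
  funext i
  induction i using Fin.cases with
  | zero => simp [pt]
  | succ k => simp [pt, Fin.succ_ne_zero]

lemma eval_pt {n : ℕ} (P : MvPolynomial (Fin (n+1)) ℂ) :
    eval (pt n) P = eval 0 (deh n P) := by
  rw [eval_deh, pt_eq]

lemma eq_zero_of_deh_eq_zero {n : ℕ} {P : MvPolynomial (Fin (n+1)) ℂ} {e : ℕ}
    (hP : P.IsHomogeneous e) (h : deh n P = 0) : P = 0 := by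
  have hQ : (X 0 * P).IsHomogeneous (1 + e) := (isHomogeneous_X ℂ 0).mul hP
  have hQ0 : X (0 : Fin (n+1)) * P = 0 := by
    apply hQ.eq_zero_of_forall_eval_eq_zero
    intro x
    rw [eval_mul, eval_X]
    rcases eq_or_ne (x 0) 0 with hx0 | hx0
    · rw [hx0, zero_mul]
    · have hxz : x = (x 0) • ((x 0)⁻¹ • x) := by
        rw [smul_smul, mul_inv_cancel₀ hx0, one_smul]
      have hz : ((x 0)⁻¹ • x) = Fin.cases 1 (fun j => (x 0)⁻¹ * x j.succ) := by
        funext i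
        induction i using Fin.cases with
        | zero => simp [inv_mul_cancel₀ hx0]
        | succ k => simp
      have hPx : eval x P = 0 := by
        conv_lhs => rw [hxz]
        rw [eval_smul_of_isHomogeneous hP, hz, ← eval_deh, h, map_zero, mul_zero]
      rw [hPx, mul_zero]
  rcases mul_eq_zero.mp hQ0 with h1 | h1
  · exact absurd h1 (X_ne_zero 0)
  · exact h1


end Deh

section Del


variable {n : ℕ}

abbrev R (n : ℕ) := MvPolynomial (Fin n) ℂ

def del (c : Fin n → R n) (P : R n) : R n := ∑ j, c j * pderiv j P

lemma del_add (c : Fin n → R n) (P Q : R n) : del c (P + Q) = del c P + del c Q := by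
  simp [del, map_add, mul_add, Finset.sum_add_distrib]

lemma del_zero (c : Fin n → R n) : del c 0 = 0 := by simp [del]

lemma del_mul (c : Fin n → R n) (P Q : R n) :
    del c (P * Q) = del c P * Q + P * del c Q := by
  simp only [del, pderiv_mul, mul_add, Finset.sum_add_distrib, Finset.sum_mul, Finset.mul_sum]
  congr 1
  · exact Finset.sum_congr rfl fun j _ => by ring
  · exact Finset.sum_congr rfl fun j _ => by ring

lemma del_one (c : Fin n → R n) : del c 1 = 0 := by simp [del]

lemma del_pow_succ (c : Fin n → R n) (P : R n) (m : ℕ) :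
    del c (P ^ (m + 1)) = ((m + 1 : ℕ) : R n) * (P ^ m * del c P) := by
  induction m with
  | zero => simp
  | succ m ih =>
    rw [pow_succ, del_mul, ih]
    push_cast
    ring

lemma del_pow_mul (c : Fin n → R n) (P : R n) (m : ℕ) :
    del c (P ^ m) * P = ((m : ℕ) : R n) * (P ^ m * del c P) := by
  cases m with
  | zero => simp [del_one]
  | succ m => rw [del_pow_succ, pow_succ]; push_cast; ring

lemma del_mem_of_natCast_mul_mem {I : Ideal (R n)} {x : R n} {k : ℕ} (hk : k ≠ 0)
    (h : ((k : ℕ) : R n) * x ∈ I) : x ∈ I := by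
  have hcast : ((k : ℕ) : R n) = C ((k : ℕ) : ℂ) := by
    rw [map_natCast C]
  have : x = C (((k : ℕ) : ℂ)⁻¹) * (((k : ℕ) : R n) * x) := by
    rw [hcast, ← mul_assoc, ← map_mul, inv_mul_cancel₀ (by exact_mod_cast hk), map_one, one_mul]
  rw [this]
  exact Ideal.mul_mem_left _ _ h

lemma del_radical {c : Fin n → R n} {I : Ideal (R n)} (hI : ∀ x ∈ I, del c x ∈ I)
    {a : R n} (ha : a ∈ I.radical) : del c a ∈ I.radical := by
  obtain ⟨N, hN⟩ := ha
  set b := del c a with hb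
  have key : ∀ k : ℕ, k ≤ N → a ^ (N - k) * b ^ (2 * k) ∈ I := by
    intro k
    induction k with
    | zero => intro _; simpa using hN
    | succ k ih =>
      intro hk
      have hkN : k < N := hk
      have h1 : a ^ (N - k) * b ^ (2 * k) ∈ I := ih hkN.le
      have h2 : del c (a ^ (N - k) * b ^ (2 * k)) ∈ I := hI _ h1
      set j := N - (k + 1) with hj
      have hNk : N - k = j + 1 := by omega
      have eq1 : del c (a ^ (N - k) * b ^ (2 * k)) =
          del c (a ^ (N - k)) * b ^ (2 * k) + a ^ (N - k) * del c (b ^ (2 * k)) :=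
        del_mul _ _ _
      have eq2 : del c (a ^ (N - k)) = ((j + 1 : ℕ) : R n) * (a ^ j * b) := by
        rw [hNk]; exact del_pow_succ c a j
      have eq3 : del c (b ^ (2 * k)) * b = ((2 * k : ℕ) : R n) * (b ^ (2 * k) * del c b) :=
        del_pow_mul c b (2 * k)
      have key2 : ((j + 1 : ℕ) : R n) * (a ^ j * b ^ (2 * k + 2)) =
          b * del c (a ^ (N - k)) * b ^ (2 * k) + a ^ (N - k) * (del c (b ^ (2 * k)) * b)
            - ((2 * k : ℕ) : R n) * (del c b * (a ^ (N - k) * b ^ (2 * k))) := by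
        rw [eq2, eq3, hNk]
        ring
      have h3 : ((j + 1 : ℕ) : R n) * (a ^ j * b ^ (2 * k + 2)) ∈ I := by
        rw [key2]
        refine Ideal.sub_mem I ?_ (Ideal.mul_mem_left _ _ (Ideal.mul_mem_left _ _ h1))
        have : b * del c (a ^ (N - k)) * b ^ (2 * k) + a ^ (N - k) * (del c (b ^ (2 * k)) * b)
            = b * del c (a ^ (N - k) * b ^ (2 * k)) := by
          rw [eq1]; ring
        rw [this]
        exact Ideal.mul_mem_left _ _ h2
      have h4 : a ^ j * b ^ (2 * k + 2) ∈ I :=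
        del_mem_of_natCast_mul_mem (Nat.succ_ne_zero j) h3
      rw [show 2 * (k + 1) = 2 * k + 2 by ring]
      exact h4
  refine ⟨2 * N, ?_⟩
  have := key N le_rfl
  simpa using this


end Del

end Helper
section Main

variable {n d : ℕ}

lemma deh_euler {f : MvPolynomial (Fin (n+1)) ℂ} (hf : f.IsHomogeneous d) :
    deh n (pderiv 0 f) + ∑ j, X j * pderiv j (deh n f) = C (d : ℂ) * deh n f := by
  have h1 := Helper.euler hf
  have h2 := congrArg (deh n) h1
  rw [map_smul, map_sum, Fin.sum_univ_succ] at h2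
  simp only [map_mul, Helper.deh_X_zero, one_mul, Helper.deh_X_succ] at h2
  rw [smul_eq_C_mul] at h2
  rw [← h2]
  congr 1
  exact Finset.sum_congr rfl fun j _ => by rw [Helper.pderiv_deh]

lemma deh_syzygy {f : MvPolynomial (Fin (n+1)) ℂ} {A : Fin (n+1) → MvPolynomial (Fin (n+1)) ℂ}
    (hA : ∑ i, A i * pderiv i f = 0) :
    deh n (A 0) * deh n (pderiv 0 f)
      + ∑ j, deh n (A j.succ) * pderiv j (deh n f) = 0 := by
  have h2 := congrArg (deh n) hA
  rw [map_sum, Fin.sum_univ_succ, map_zero] at h2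
  simp only [map_mul] at h2
  rw [← h2]
  congr 1
  exact Finset.sum_congr rfl fun j _ => by rw [Helper.pderiv_deh]

lemma saito_of_syzygy {f : MvPolynomial (Fin (n+1)) ℂ} (hf : f.IsHomogeneous d) (hd : 0 < d)
    {A : Fin (n+1) → MvPolynomial (Fin (n+1)) ℂ} (hA : ∑ i, A i * pderiv i f = 0)
    (h0 : eval (pt n) (A 0) ≠ 0) : SaitoQH (deh n f) := by
  classical
  set g := deh n f with hgdef
  set g0 := deh n (pderiv 0 f) with hg0def
  set a : Fin (n+1) → MvPolynomial (Fin n) ℂ := fun i => deh n (A i) with hadef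
  have heuler : g0 + ∑ j, X j * pderiv j g = C (d : ℂ) * g := deh_euler hf
  have hsyzd : a 0 * g0 + ∑ j, a j.succ * pderiv j g = 0 := deh_syzygy hA
  refine ⟨C (d : ℂ) * a 0, ?_, ?_⟩
  · rw [map_mul, eval_C]
    have : eval 0 (a 0) = eval (pt n) (A 0) := (Helper.eval_pt (A 0)).symm
    rw [this]
    exact mul_ne_zero (Nat.cast_ne_zero.mpr hd.ne') h0
  · rw [Ideal.mem_span_range_iff_exists_fun]
    refine ⟨fun j => a 0 * X j - a j.succ, ?_⟩
    have e1 : ∑ j, (a 0 * X j - a j.succ) * pderiv j g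
        = a 0 * (∑ j, X j * pderiv j g) - ∑ j, a j.succ * pderiv j g := by
      rw [Finset.mul_sum, ← Finset.sum_sub_distrib]
      exact Finset.sum_congr rfl fun j _ => by ring
    rw [e1]
    have e2 : ∑ j, X j * pderiv j g = C (d : ℂ) * g - g0 := by
      rw [← heuler]; ring
    have e3 : ∑ j, a j.succ * pderiv j g = -(a 0 * g0) :=
      eq_neg_of_add_eq_zero_right hsyzd
    rw [e2, e3]
    ring

end Main
section Forward

variable {n d m : ℕ}

lemma deh_rename (n : ℕ) (q : MvPolynomial (Fin n) ℂ) :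
    deh n (rename Fin.succ q) = q := by
  rw [deh, aeval_rename]
  have : ((fun i => Fin.cases 1 (fun j => X j) i : Fin (n+1) → MvPolynomial (Fin n) ℂ) ∘ Fin.succ)
      = X := by
    funext j
    simp
  rw [this]
  exact aeval_X_left_apply q

lemma syzygy_of_saito {f : MvPolynomial (Fin (n+1)) ℂ} (hf : f.IsHomogeneous d)
    (ρ : Fin m → Fin (n + 1) → MvPolynomial (Fin (n + 1)) ℂ)
    (hgen : ∀ A : Fin (n + 1) → MvPolynomial (Fin (n + 1)) ℂ,
      (∑ i, A i * pderiv i f = 0) →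
        A ∈ Submodule.span (MvPolynomial (Fin (n + 1)) ℂ) (Set.range ρ))
    (hs : SaitoQH (deh n f)) : ∃ j k, eval (pt n) (ρ j k) ≠ 0 := by
  classical
  obtain ⟨u, hu0, humem⟩ := hs
  rw [Ideal.mem_span_range_iff_exists_fun] at humem
  obtain ⟨b, hb⟩ := humem
  set g := deh n f with hgdef
  set g0 := deh n (pderiv 0 f) with hg0def
  have heuler : g0 + ∑ j, X j * pderiv j g = C (d : ℂ) * g := deh_euler hf
  set B : Fin (n+1) → MvPolynomial (Fin (n+1)) ℂ :=
    Fin.cases (rename Fin.succ u) (fun j => rename Fin.succ (u * X j - C (d : ℂ) * b j))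
    with hBdef
  have hB0 : deh n (B 0) = u := by rw [hBdef]; simp only [Fin.cases_zero]; exact deh_rename n u
  have hBs : ∀ j : Fin n, deh n (B j.succ) = u * X j - C (d : ℂ) * b j := by
    intro j
    rw [hBdef]
    simp only [Fin.cases_succ]
    exact deh_rename n _
  have hrel : deh n (∑ i, B i * pderiv i f) = 0 := by
    rw [map_sum, Fin.sum_univ_succ]
    simp only [map_mul, hB0, hBs]
    have hpd : ∀ j : Fin n, deh n (pderiv j.succ f) = pderiv j g :=
      fun j => (Helper.pderiv_deh f j).symm
    rw [Finset.sum_congr rfl fun j _ => by rw [hpd j]]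
    have e1 : ∑ j, (u * X j - C (d : ℂ) * b j) * pderiv j g
        = u * (∑ j, X j * pderiv j g) - C (d : ℂ) * (∑ j, b j * pderiv j g) := by
      rw [Finset.mul_sum, Finset.mul_sum, ← Finset.sum_sub_distrib]
      exact Finset.sum_congr rfl fun j _ => by ring
    have e2 : ∑ j, X j * pderiv j g = C (d : ℂ) * g - g0 := by rw [← heuler]; ring
    rw [e1, e2, hb]
    ring
  set M : ℕ := Finset.univ.sup fun i => (B i).totalDegree with hMdef
  set A : Fin (n+1) → MvPolynomial (Fin (n+1)) ℂ := fun i =>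
    ∑ k ∈ Finset.range (M+1), X 0 ^ (M - k) * homogeneousComponent k (B i) with hAdef
  have hAdeh : ∀ i, deh n (A i) = deh n (B i) := by
    intro i
    rw [hAdef]
    simp only
    rw [map_sum]
    have e1 : ∀ k ∈ Finset.range (M+1),
        deh n (X 0 ^ (M - k) * homogeneousComponent k (B i))
          = deh n (homogeneousComponent k (B i)) := by
      intro k _
      rw [map_mul, map_pow, Helper.deh_X_zero, one_pow, one_mul]
    rw [Finset.sum_congr rfl e1, ← map_sum]
    congr 1
    have hdeg : (B i).totalDegree ≤ M :=
      Finset.le_sup (f := fun i => (B i).totalDegree) (Finset.mem_univ i)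
    calc ∑ k ∈ Finset.range (M+1), homogeneousComponent k (B i)
        = ∑ k ∈ Finset.range ((B i).totalDegree + 1), homogeneousComponent k (B i) := by
          refine (Finset.sum_subset (Finset.range_subset_range.mpr (by omega)) ?_).symm
          intro k hk hk'
          refine homogeneousComponent_eq_zero _ _ ?_
          simp only [Finset.mem_range] at hk hk'
          omega
      _ = B i := sum_homogeneousComponent _
  have hAhom : ∀ i, (A i).IsHomogeneous M := by
    intro i
    rw [hAdef]
    simp only
    refine MvPolynomial.IsHomogeneous.sum _ _ _ fun k hk => ?_
    have hkM : k ≤ M := by simp only [Finset.mem_range] at hk; omega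
    have := (isHomogeneous_X_pow (R := ℂ) (0 : Fin (n+1)) (M - k)).mul
      (homogeneousComponent_isHomogeneous k (B i))
    rwa [Nat.sub_add_cancel hkM] at this
  have hAsyz : ∑ i, A i * pderiv i f = 0 := by
    refine Helper.eq_zero_of_deh_eq_zero (e := M + (d - 1)) ?_ ?_
    · exact MvPolynomial.IsHomogeneous.sum _ _ _ fun i _ =>
        (hAhom i).mul (Helper.pderiv_isHomogeneous hf i)
    · rw [map_sum]
      have e1 : ∀ i : Fin (n+1), deh n (A i * pderiv i f) = deh n (B i * pderiv i f) := by
        intro i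
        rw [map_mul, map_mul, hAdeh]
      rw [Finset.sum_congr rfl fun i _ => e1 i, ← map_sum]
      exact hrel
  have hmem := hgen A hAsyz
  rw [Submodule.mem_span_range_iff_exists_fun] at hmem
  obtain ⟨h, hh⟩ := hmem
  have h0 : ∑ j, h j * ρ j 0 = A 0 := by
    have := congrFun hh 0
    rwa [Finset.sum_apply] at this
  have hA0 : eval (pt n) (A 0) ≠ 0 := by
    rw [Helper.eval_pt, hAdeh, hB0]
    exact hu0
  by_contra hcon
  push_neg at hcon
  apply hA0
  rw [← h0, map_sum]
  refine Finset.sum_eq_zero fun j _ => ?_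
  rw [map_mul, hcon j 0, mul_zero]

end Forward
section Case2

variable {n d : ℕ}

lemma no_syzygy_case {f : MvPolynomial (Fin (n+1)) ℂ} (hf : f.IsHomogeneous d) (hd : 0 < d)
    (hiso : {P : Projectivization ℂ (Fin (n + 1) → ℂ) |
      ∀ i, eval P.rep (pderiv i f) = 0}.Finite)
    (hsing : ∀ i, eval (pt n) (pderiv i f) = 0)
    {A : Fin (n+1) → MvPolynomial (Fin (n+1)) ℂ} (hA : ∑ i, A i * pderiv i f = 0)
    (h0 : eval (pt n) (A 0) = 0) {κ : Fin n} (hκ : eval (pt n) (A κ.succ) ≠ 0) : False := by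
  classical
  set g := deh n f with hgdef
  set g0 := deh n (pderiv 0 f) with hg0def
  set a : Fin (n+1) → MvPolynomial (Fin n) ℂ := fun i => deh n (A i) with hadef
  set c : Fin n → MvPolynomial (Fin n) ℂ := fun j => a j.succ - X j * a 0 with hcdef
  have heuler : g0 + ∑ j, X j * pderiv j g = C (d : ℂ) * g := deh_euler hf
  have hsyzd : a 0 * g0 + ∑ j, a j.succ * pderiv j g = 0 := deh_syzygy hA
  have e2 : ∑ j, X j * pderiv j g = C (d : ℂ) * g - g0 := by rw [← heuler]; ring
  have e3 : ∑ j, a j.succ * pderiv j g = -(a 0 * g0) := eq_neg_of_add_eq_zero_right hsyzd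
  set I : Ideal (MvPolynomial (Fin n) ℂ) :=
    Ideal.span ({g} ∪ Set.range fun j : Fin n => pderiv j g) with hIdef
  have hgI : g ∈ I := Ideal.subset_span (Set.mem_union_left _ rfl)
  have hgjI : ∀ j : Fin n, pderiv j g ∈ I := fun j =>
    Ideal.subset_span (Set.mem_union_right _ ⟨j, rfl⟩)
  -- the derivation maps I into I
  have hdelg : Helper.del c g = -(C (d : ℂ) * (a 0 * g)) := by
    have e1 : Helper.del c g
        = (∑ j, a j.succ * pderiv j g) - a 0 * (∑ j, X j * pderiv j g) := by
      rw [Helper.del, Finset.mul_sum, ← Finset.sum_sub_distrib]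
      exact Finset.sum_congr rfl fun j _ => by rw [hcdef]; ring
    rw [e1, e2, e3]
    ring
  have hdelgj : ∀ jj : Fin n, Helper.del c (pderiv jj g) ∈ I := by
    intro jj
    have e : Helper.del c (pderiv jj g)
        = pderiv jj (Helper.del c g) - ∑ i, pderiv jj (c i) * pderiv i g := by
      rw [Helper.del, Helper.del, map_sum, ← Finset.sum_sub_distrib]
      refine Finset.sum_congr rfl fun i _ => ?_
      rw [pderiv_mul, Helper.pderiv_comm jj i]
      ring
    rw [e, hdelg]
    refine Ideal.sub_mem I ?_ (Ideal.sum_mem I fun i _ => Ideal.mul_mem_left _ _ (hgjI i))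
    rw [map_neg, pderiv_C_mul, pderiv_mul]
    exact neg_mem (Ideal.mul_mem_left _ _ (Ideal.add_mem I
      (Ideal.mul_mem_left _ _ hgI) (Ideal.mul_mem_left _ _ (hgjI jj))))
  have hdelI : ∀ x ∈ I, Helper.del c x ∈ I := by
    intro x hx
    induction hx using Submodule.span_induction with
    | mem y hy =>
      rcases hy with hy | ⟨j, rfl⟩
      · rw [Set.mem_singleton_iff] at hy
        subst hy
        rw [hdelg]
        exact neg_mem (Ideal.mul_mem_left _ _ (Ideal.mul_mem_left _ _ hgI))
      · exact hdelgj j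
    | zero => rw [Helper.del_zero]; exact Ideal.zero_mem I
    | add y z hy hz hpy hpz => rw [Helper.del_add]; exact Ideal.add_mem I hpy hpz
    | smul r y hy hpy =>
      rw [smul_eq_mul, Helper.del_mul]
      exact Ideal.add_mem I (Ideal.mul_mem_left _ _ hy) (Ideal.mul_mem_left _ _ hpy)
  -- the zero locus of I is finite
  have hevalg : ∀ y : Fin n → ℂ, y ∈ zeroLocus ℂ I → eval y g = 0 := fun y hy => hy g hgI
  have hevalgj : ∀ (y : Fin n → ℂ), y ∈ zeroLocus ℂ I → ∀ j, eval y (pderiv j g) = 0 :=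
    fun y hy j => hy _ (hgjI j)
  have hZfin : (zeroLocus ℂ I).Finite := by
    set vec : (Fin n → ℂ) → (Fin (n+1) → ℂ) := fun y => Fin.cases 1 y with hvecdef
    have hvne : ∀ y, vec y ≠ 0 := by
      intro y h
      have := congrFun h 0
      rw [hvecdef] at this
      simp at this
    set ψ : (Fin n → ℂ) → Projectivization ℂ (Fin (n+1) → ℂ) :=
      fun y => Projectivization.mk ℂ (vec y) (hvne y) with hψdef
    have hinj : Function.Injective ψ := by
      intro y y' h
      rw [hψdef] at h
      simp only [Projectivization.mk_eq_mk_iff] at h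
      obtain ⟨u, hu⟩ := h
      have hu1 : (u : ℂ) = 1 := by
        have h0' := congrFun hu 0
        simp only [Pi.smul_apply, Units.smul_def, smul_eq_mul, hvecdef] at h0'
        simpa using h0'
      funext j
      have hj := congrFun hu j.succ
      simp only [Pi.smul_apply, Units.smul_def, smul_eq_mul, hvecdef] at hj
      have : y' j = y j := by simpa [hu1] using hj
      exact this.symm
    have hsub : zeroLocus ℂ I ⊆ ψ ⁻¹' {P : Projectivization ℂ (Fin (n + 1) → ℂ) |
        ∀ i, eval P.rep (pderiv i f) = 0} := by
      intro y hy
      obtain ⟨u, hu⟩ := Projectivization.exists_smul_eq_mk_rep ℂ (vec y) (hvne y)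
      intro i
      have hrep : (ψ y).rep = (u : ℂ) • vec y := by
        rw [hψdef]
        rw [← hu]
        rfl
      rw [hrep, Helper.eval_smul_of_isHomogeneous (Helper.pderiv_isHomogeneous hf i)]
      have hv : eval (vec y) (pderiv i f) = eval y (deh n (pderiv i f)) := by
        rw [Helper.eval_deh]
      rw [hv]
      induction i using Fin.cases with
      | zero =>
        have hg0y : eval y g0 = 0 := by
          have h := congrArg (eval y) heuler
          rw [map_add, map_sum, map_mul, eval_C, hevalg y hy, mul_zero] at h
          have hsum : ∑ j, eval y (X j * pderiv j g) = 0 :=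
            Finset.sum_eq_zero fun j _ => by rw [map_mul, hevalgj y hy j, mul_zero]
          rw [Finset.sum_congr rfl fun j _ => (map_mul (eval y) _ _ : _)] at h
          have hsum' : ∑ j, eval y (X j) * eval y (pderiv j g) = 0 :=
            Finset.sum_eq_zero fun j _ => by rw [hevalgj y hy j, mul_zero]
          rw [hsum'] at h
          simpa using h
        rw [← hg0def, hg0y, mul_zero]
      | succ jj =>
        rw [(Helper.pderiv_deh f jj : pderiv jj (deh n f) = deh n (pderiv jj.succ f)).symm]
        rw [hevalgj y hy jj, mul_zero]
    exact ((hiso.preimage hinj.injOn).subset hsub)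
  -- choose a witness polynomial vanishing on the zero locus with nonzero derivative at 0
  have h0Z : (0 : Fin n → ℂ) ∈ zeroLocus ℂ I := by
    have hf0 : eval (pt n) f = 0 := by
      have h := congrArg (eval (pt n)) (Helper.euler hf)
      rw [map_sum, smul_eq_C_mul, map_mul, eval_C] at h
      have hz : ∑ i, eval (pt n) (X i * pderiv i f) = 0 :=
        Finset.sum_eq_zero fun i _ => by rw [map_mul, hsing i, mul_zero]
      rw [hz] at h
      have hd' : (d : ℂ) ≠ 0 := Nat.cast_ne_zero.mpr hd.ne'
      exact (mul_eq_zero.mp h.symm).resolve_left hd'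
    have hIle : I ≤ vanishingIdeal ℂ {(0 : Fin n → ℂ)} := by
      rw [hIdef, Ideal.span_le]
      rintro p (hp | ⟨j, rfl⟩)
      · rw [Set.mem_singleton_iff] at hp
        subst hp
        intro x hx
        rw [Set.mem_singleton_iff] at hx
        subst hx
        rw [MvPolynomial.aeval_eq_eval, hgdef, ← Helper.eval_pt]
        exact hf0
      · intro x hx
        rw [Set.mem_singleton_iff] at hx
        subst hx
        rw [hgdef]
        show eval (0 : Fin n → ℂ) (pderiv j (deh n f)) = 0
        rw [Helper.pderiv_deh, ← Helper.eval_pt]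
        exact hsing j.succ
    intro p hp
    exact hIle hp 0 rfl
  set Zf : Finset (Fin n → ℂ) := hZfin.toFinset with hZfdef
  set sel : (Fin n → ℂ) → Fin n := fun q => if h : ∃ i, q i ≠ 0 then h.choose else κ with hseldef
  have hsel : ∀ q : Fin n → ℂ, q ≠ 0 → q (sel q) ≠ 0 := by
    intro q hq
    have hex : ∃ i, q i ≠ 0 := by
      by_contra hno
      push_neg at hno
      exact hq (funext fun i => hno i)
    rw [hseldef]
    simp only [dif_pos hex]
    exact hex.choose_spec
  set Q : MvPolynomial (Fin n) ℂ := ∏ q ∈ Zf.erase 0, (X (sel q) - C (q (sel q))) with hQdef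
  set w : MvPolynomial (Fin n) ℂ := X κ * Q with hwdef
  have hwvan : w ∈ vanishingIdeal ℂ (zeroLocus ℂ I) := by
    intro y hy
    have hyZ : y ∈ Zf := by rw [hZfdef]; exact hZfin.mem_toFinset.mpr hy
    rcases eq_or_ne y 0 with rfl | hyne
    · rw [MvPolynomial.aeval_eq_eval, hwdef, map_mul, eval_X]
      simp
    · rw [MvPolynomial.aeval_eq_eval, hwdef, hQdef, map_mul, map_prod]
      have hz : ∏ q ∈ Zf.erase 0, eval y (X (sel q) - C (q (sel q))) = 0 := by
        apply Finset.prod_eq_zero (Finset.mem_erase.mpr ⟨hyne, hyZ⟩)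
        rw [map_sub, eval_X, eval_C, sub_self]
      rw [hz, mul_zero]
  have hwrad : w ∈ I.radical := by
    rw [← vanishingIdeal_zeroLocus_eq_radical (K := ℂ)]
    exact hwvan
  have hdelwrad : Helper.del c w ∈ I.radical := Helper.del_radical hdelI hwrad
  have hdelw0 : eval 0 (Helper.del c w) = 0 := by
    have hmem : Helper.del c w ∈ vanishingIdeal ℂ (zeroLocus ℂ I) := by
      rw [vanishingIdeal_zeroLocus_eq_radical]
      exact hdelwrad
    exact hmem 0 h0Z
  have hQ0 : eval 0 Q ≠ 0 := by
    rw [hQdef, map_prod]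
    refine Finset.prod_ne_zero_iff.mpr fun q hq => ?_
    rw [map_sub, eval_X, eval_C]
    have hqne : q ≠ 0 := (Finset.mem_erase.mp hq).1
    have := hsel q hqne
    simpa using this
  have hdelXκ : Helper.del c (X κ) = c κ := by
    rw [Helper.del]
    rw [Finset.sum_eq_single κ]
    · rw [pderiv_X_self, mul_one]
    · intro i _ hi
      rw [pderiv_X_of_ne (Ne.symm hi), mul_zero]
    · intro h
      exact absurd (Finset.mem_univ κ) h
  have hval : eval 0 (Helper.del c w) = eval 0 (c κ) * eval 0 Q := by
    rw [hwdef, Helper.del_mul, hdelXκ, map_add, map_mul, map_mul, eval_X]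
    simp
  have hcκ : eval 0 (c κ) ≠ 0 := by
    have : c κ = a κ.succ - X κ * a 0 := by rw [hcdef]
    rw [this, map_sub, map_mul, eval_X]
    have h1 : eval 0 (a κ.succ) = eval (pt n) (A κ.succ) := by
      rw [hadef, ← Helper.eval_pt]
    simp only [Pi.zero_apply, zero_mul, sub_zero, h1]
    exact hκ
  rw [hval] at hdelw0
  exact (mul_ne_zero hcκ hQ0) hdelw0

end Case2
/-- Theorem 3.3 / Corollary 3.4: with `ρ₁,…,ρ_m` generators of the module `Syz(J_f)` of Jacobian
syzygies (the columns of a first syzygy matrix `M_f`), the singular point `p = (1:0:⋯:0)` of the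
hypersurface `V(f)` (with only isolated singularities) is quasi-homogeneous (Saito's condition
for `g = f(1,y)`) iff the evaluated matrix `M_f(p)` is nonzero, i.e. some entry `ρⱼ` has a
component not vanishing at `p`. -/
theorem stmt_1 (n d m : ℕ) (hn : 2 ≤ n) (f : MvPolynomial (Fin (n + 1)) ℂ)
    (hf : f.IsHomogeneous d)
    (hiso : {P : Projectivization ℂ (Fin (n + 1) → ℂ) |
      ∀ i, eval P.rep (pderiv i f) = 0}.Finite)
    (hsing : ∀ i, eval (pt n) (pderiv i f) = 0)
    (ρ : Fin m → Fin (n + 1) → MvPolynomial (Fin (n + 1)) ℂ)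
    (hsyz : ∀ j, ∑ i, ρ j i * pderiv i f = 0)
    (hgen : ∀ A : Fin (n + 1) → MvPolynomial (Fin (n + 1)) ℂ,
      (∑ i, A i * pderiv i f = 0) →
        A ∈ Submodule.span (MvPolynomial (Fin (n + 1)) ℂ) (Set.range ρ)) :
    SaitoQH (deh n f) ↔ ∃ j k, eval (pt n) (ρ j k) ≠ 0 := by
  classical
  have hex : ∃ i, pderiv i f ≠ 0 := by
    by_contra hno
    push_neg at hno
    have hn0 : 0 < n := by omega
    set j0 : Fin n := ⟨0, hn0⟩ with hj0def
    set vec : ℂ → (Fin (n+1) → ℂ) := fun t => Fin.cases 1 (fun j => if j = j0 then t else 0)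
      with hvecdef
    have hvne : ∀ t : ℂ, vec t ≠ 0 := by
      intro t h
      have := congrFun h 0
      rw [hvecdef] at this
      simp at this
    have hinj : Function.Injective fun t : ℂ => Projectivization.mk ℂ (vec t) (hvne t) := by
      intro t t' h
      simp only [Projectivization.mk_eq_mk_iff] at h
      obtain ⟨u, hu⟩ := h
      have hu1 : (u : ℂ) = 1 := by
        have h0' := congrFun hu 0
        simp only [Pi.smul_apply, Units.smul_def, smul_eq_mul, hvecdef] at h0'
        simpa using h0'
      have hj := congrFun hu j0.succ
      simp only [Pi.smul_apply, Units.smul_def, smul_eq_mul, hvecdef] at hj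
      simpa [hu1] using hj.symm
    have hinf : {P : Projectivization ℂ (Fin (n + 1) → ℂ) |
        ∀ i, eval P.rep (pderiv i f) = 0}.Infinite := by
      apply Set.infinite_of_injective_forall_mem hinj
      intro t
      intro i
      rw [hno i, map_zero]
    exact hinf hiso
  have hd : 0 < d := by
    rcases Nat.eq_zero_or_pos d with hd0 | h
    · exfalso
      obtain ⟨i, hi⟩ := hex
      apply hi
      conv_lhs => rw [f.as_sum]
      rw [map_sum]
      refine Finset.sum_eq_zero fun s hs => ?_
      have hs0 : s = 0 := by
        have h1 := hf (mem_support_iff.mp hs)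
        rw [show (1 : Fin (n+1) → ℕ) = fun _ => 1 from rfl, ← Finsupp.degree_eq_weight_one, hd0] at h1
        exact (Finsupp.degree_eq_zero_iff s).mp h1
      subst hs0
      rw [pderiv_monomial]
      simp
    · exact h
  constructor
  · exact syzygy_of_saito hf ρ hgen
  · rintro ⟨j, k, hk⟩
    rcases eq_or_ne (eval (pt n) (ρ j 0)) 0 with h0 | h0
    · have hk0 : k ≠ 0 := by
        rintro rfl
        exact hk h0
      obtain ⟨κ, hκs⟩ := Fin.exists_succ_eq.mpr hk0
      exact (no_syzygy_case hf hd hiso hsing (hsyz j) h0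
        (by rw [hκs]; exact hk)).elim
    · exact saito_of_syzygy hf hd (hsyz j) h0
end
end

section
/- Let n ≥ 1 and let f ∈ ℂ[x₀,…,xₙ] be homogeneous of degree d ≥ 1. Suppose there exists (A₀,…,Aₙ) ∈ R^{n+1} with A₀∂₀f + ⋯ + Aₙ∂ₙf = 0 and A₀(1,0,…,0) ≠ 0. Set g(y₁,…,yₙ) = f(1,y₁,…,yₙ), gⱼ = ∂g/∂yⱼ and bⱼ(y) = Aⱼ(1,y₁,…,yₙ). Then, using the identity b₀·(d·g − Σⱼ yⱼ gⱼ) + Σⱼ bⱼ gⱼ = 0 with b₀(0) ≠ 0, one concludes that g belongs to the ideal (g₁,…,gₙ) in the localization of ℂ[y₁,…,yₙ] at the maximal ideal (y₁,…,yₙ). -/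
open MvPolynomial

noncomputable section

lemma X_mul_pderiv_monomial' {N : ℕ} (i : Fin N) (s : Fin N →₀ ℕ) (a : ℂ) :
    X i * pderiv i (monomial s a) = ((s i : ℂ)) • monomial s a := by
  rw [pderiv_monomial]
  rcases Nat.eq_zero_or_pos (s i) with h | h
  · simp [h]
  · rw [X, monomial_mul, one_mul, add_tsub_cancel_of_le (by
      rwa [Finsupp.single_le_iff])]
    rw [smul_monomial, smul_eq_mul, mul_comm]

/-- Euler's identity for homogeneous polynomials. -/
lemma euler {N d : ℕ} {f : MvPolynomial (Fin N) ℂ} (hf : f.IsHomogeneous d) :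
    ∑ i, X i * pderiv i f = C (d : ℂ) * f := by
  conv_lhs => rw [f.as_sum]
  conv_rhs => rw [f.as_sum]
  rw [Finset.mul_sum]
  simp only [map_sum, Finset.mul_sum]
  rw [Finset.sum_comm]
  refine Finset.sum_congr rfl fun m hm => ?_
  rw [mem_support_iff] at hm
  simp only [X_mul_pderiv_monomial']
  rw [← Finset.sum_smul]
  have hdeg : (∑ i, (m i : ℂ)) = (d : ℂ) := by
    have h1 : Finsupp.weight 1 m = d := hf hm
    rw [Pi.one_def, ← Finsupp.degree_eq_weight_one] at h1
    rw [← h1, Finsupp.degree_apply]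
    rw [Finset.sum_subset (Finset.subset_univ m.support)
      (fun x _ hx => by simpa using (Finsupp.notMem_support_iff.mp hx))]
    push_cast
    rfl
  rw [hdeg, C_mul']

/-- Chain rule: dehomogenization commutes with partial derivatives in the remaining
variables. -/
lemma pderiv_deh {n : ℕ} (j : Fin n) (f : MvPolynomial (Fin (n + 1)) ℂ) :
    pderiv j (deh n f) = deh n (pderiv j.succ f) := by
  induction f using MvPolynomial.induction_on with
  | C a => simp [deh]
  | add p q hp hq => simp [hp, hq]
  | mul_X p i ih =>
    rw [map_mul, pderiv_mul, pderiv_mul, map_add, map_mul, map_mul, ih]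
    congr 1
    cases i using Fin.cases with
    | zero => simp [deh, Fin.succ_ne_zero]
    | succ k =>
      simp only [deh, aeval_X, Fin.cases_succ]
      rcases eq_or_ne k j with rfl | h
      · simp
      · rw [pderiv_X_of_ne h, pderiv_X_of_ne (fun hh => h (Fin.succ_injective _ hh)), map_zero]

/-- Evaluating a dehomogenized polynomial at `0` agrees with evaluating the original
polynomial at `(1:0:⋯:0)`. -/
lemma eval_deh {n : ℕ} (p : MvPolynomial (Fin (n + 1)) ℂ) :
    eval (0 : Fin n → ℂ) (deh n p) = eval (pt n) p := by
  induction p using MvPolynomial.induction_on with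
  | C a => simp [deh]
  | add p q hp hq => rw [map_add, eval_add, eval_add, hp, hq]
  | mul_X p i ih =>
    rw [map_mul, eval_mul, eval_mul, ih]
    congr 1
    cases i using Fin.cases with
    | zero => simp [deh, pt]
    | succ k => simp [deh, pt, Fin.succ_ne_zero]

/-- Case 1 of the proof of Theorem 3.1: a Jacobian syzygy `(A₀,…,Aₙ)` of `f` whose zeroth
component does not vanish at `p = (1:0:⋯:0)` yields the dehomogenized identity
`b₀·(d·g − Σⱼ yⱼ gⱼ) + Σⱼ bⱼ gⱼ = 0` (where `bⱼ(y) = Aⱼ(1,y)`) with `b₀(0) ≠ 0`, and hence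
that `g = f(1,y)` belongs to the ideal `(g₁,…,gₙ)` in the localization of `ℂ[y₁,…,yₙ]`
at the maximal ideal `(y₁,…,yₙ)`. -/
theorem stmt_4 (n d : ℕ) (hn : 1 ≤ n) (hd : 1 ≤ d) (f : MvPolynomial (Fin (n + 1)) ℂ)
    (hf : f.IsHomogeneous d)
    (A : Fin (n + 1) → MvPolynomial (Fin (n + 1)) ℂ)
    (hA : ∑ i, A i * pderiv i f = 0)
    (h0 : eval (pt n) (A 0) ≠ 0) :
    (deh n (A 0) * (C (d : ℂ) * deh n f - ∑ j, X j * pderiv j (deh n f))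
        + ∑ j, deh n (A j.succ) * pderiv j (deh n f) = 0) ∧
      eval (0 : Fin n → ℂ) (deh n (A 0)) ≠ 0 ∧
      SaitoQH (deh n f) := by
  have hX0 : deh n (X (0 : Fin (n+1))) = 1 := by simp [deh]
  have hXs : ∀ j : Fin n, deh n (X j.succ) = X j := by intro j; simp [deh]
  have hEuler : deh n (pderiv 0 f) =
      C (d : ℂ) * deh n f - ∑ j, X j * pderiv j (deh n f) := by
    have h := congrArg (deh n) (euler hf)
    have hC : deh n (C (d : ℂ)) = C (d : ℂ) := by simp [deh]
    simp only [map_sum, map_mul, hC] at h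
    rw [Fin.sum_univ_succ, hX0, one_mul] at h
    simp only [hXs, ← pderiv_deh] at h
    rw [eq_sub_iff_add_eq]
    exact h
  have hmain : deh n (A 0) * (C (d : ℂ) * deh n f - ∑ j, X j * pderiv j (deh n f))
      + ∑ j, deh n (A j.succ) * pderiv j (deh n f) = 0 := by
    have h := congrArg (deh n) hA
    simp only [map_sum, map_mul, map_zero] at h
    rw [Fin.sum_univ_succ] at h
    rw [← hEuler]
    simp only [← pderiv_deh] at h ⊢
    exact h
  have hev : eval (0 : Fin n → ℂ) (deh n (A 0)) ≠ 0 := by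
    rw [eval_deh]; exact h0
  refine ⟨hmain, hev, C (d : ℂ) * deh n (A 0), ?_, ?_⟩
  · simp only [eval_mul, eval_C]
    exact mul_ne_zero (Nat.cast_ne_zero.mpr (by omega)) hev
  · have hid : C (d : ℂ) * deh n (A 0) * deh n f =
        deh n (A 0) * (∑ j, X j * pderiv j (deh n f))
          - ∑ j, deh n (A j.succ) * pderiv j (deh n f) := by
      linear_combination hmain
    rw [hid]
    apply Ideal.sub_mem
    · rw [Finset.mul_sum]
      refine Ideal.sum_mem _ fun j _ => ?_
      rw [← mul_assoc]
      exact Ideal.mul_mem_left _ _ (Ideal.subset_span ⟨j, rfl⟩)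
    · refine Ideal.sum_mem _ fun j _ => ?_
      exact Ideal.mul_mem_left _ _ (Ideal.subset_span ⟨j, rfl⟩)
end
end

section
/- Let n ≥ 2 and let f ∈ ℂ[x₀,…,xₙ] be homogeneous of degree d ≥ 2 such that V = V(f) ⊆ ℙⁿ has only isolated singularities. Assume every singular point of V is quasi-homogeneous, rendered as: for every q ∈ ℂ^{n+1} ∖ {0} with ∂₀f(q) = ⋯ = ∂ₙf(q) = 0 there exists a Jacobian syzygy ρ ∈ Syz(J_f) with ρ(q) ≠ 0 (as a vector in ℂ^{n+1}). Let ρ₁,…,ρ_m be homogeneous generators of the R-module Syz(J_f), of degrees d₁ ≤ ⋯ ≤ d_m. Then for every countable subset Y ⊆ ℂ^{n+1} ∖ {0} there exists a homogeneous Jacobian syzygy ρ ∈ Syz(J_f) of degree d_m such that ρ(y) ≠ 0 for every y ∈ Y. -/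
open MvPolynomial

noncomputable section

/-- Proposition 3.6: let `V(f) ⊆ ℙⁿ` have only isolated singularities, all of them
quasi-homogeneous (rendered via Theorem 3.1: at every nonzero common zero `q` of the partials
there is a Jacobian syzygy not vanishing at `q`). Let `ρ₀,…,ρ_m` be homogeneous generators of
`Syz(J_f)` of degrees `d₀ ≤ ⋯ ≤ d_m`. Then for every countable set `Y ⊆ ℂ^{n+1} ∖ {0}` there
is a homogeneous Jacobian syzygy of degree `d_m` that is nonzero at every point of `Y`. -/
theorem stmt_11 (n d m : ℕ) (hn : 2 ≤ n) (hd : 2 ≤ d)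
    (f : MvPolynomial (Fin (n + 1)) ℂ) (hf : f.IsHomogeneous d)
    (hiso : {P : Projectivization ℂ (Fin (n + 1) → ℂ) |
      ∀ i, eval P.rep (pderiv i f) = 0}.Finite)
    (hQH : ∀ q : Fin (n + 1) → ℂ, q ≠ 0 → (∀ i, eval q (pderiv i f) = 0) →
      ∃ A : Fin (n + 1) → MvPolynomial (Fin (n + 1)) ℂ,
        (∑ i, A i * pderiv i f = 0) ∧ ∃ k, eval q (A k) ≠ 0)
    (ρ : Fin (m + 1) → Fin (n + 1) → MvPolynomial (Fin (n + 1)) ℂ)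
    (dd : Fin (m + 1) → ℕ) (hmono : Monotone dd)
    (hhom : ∀ j i, (ρ j i).IsHomogeneous (dd j))
    (hsyz : ∀ j, ∑ i, ρ j i * pderiv i f = 0)
    (hgen : ∀ A : Fin (n + 1) → MvPolynomial (Fin (n + 1)) ℂ,
      (∑ i, A i * pderiv i f = 0) →
        A ∈ Submodule.span (MvPolynomial (Fin (n + 1)) ℂ) (Set.range ρ))
    (Y : Set (Fin (n + 1) → ℂ)) (hY : Y.Countable) (hY0 : ∀ y ∈ Y, y ≠ 0) :
    ∃ A : Fin (n + 1) → MvPolynomial (Fin (n + 1)) ℂ,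
      (∑ i, A i * pderiv i f = 0) ∧
      (∀ i, (A i).IsHomogeneous (dd (Fin.last m))) ∧
      ∀ y ∈ Y, ∃ i, eval y (A i) ≠ 0 := by
  classical
  obtain ⟨n', rfl⟩ : ∃ n', n = n' + 2 := ⟨n - 2, by omega⟩
  set dm := dd (Fin.last m) with hdm
  -- the "weights" appearing in evaluations of our candidate syzygies
  set w : (Fin (n' + 2 + 1) → ℂ) → (Fin (m + 1) × Fin (n' + 2 + 1)) → Fin (n' + 2 + 1) → ℂ :=
    fun y p i => (y p.2) ^ (dm - dd p.1) * eval y (ρ p.1 i) with hw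
  -- Step 1: for each y ∈ Y there are p, i with w y p i ≠ 0.
  have key : ∀ y ∈ Y, ∃ p i, w y p i ≠ 0 := by
    intro y hy
    have hy0 : y ≠ 0 := hY0 y hy
    -- first get some syzygy nonvanishing at y
    obtain ⟨A, hA, k, hAk⟩ :
        ∃ A : Fin (n' + 2 + 1) → MvPolynomial (Fin (n' + 2 + 1)) ℂ,
          (∑ i, A i * pderiv i f = 0) ∧ ∃ k, eval y (A k) ≠ 0 := by
      by_cases hs : ∀ i, eval y (pderiv i f) = 0
      · exact hQH y hy0 hs
      · push_neg at hs
        obtain ⟨i0, hi0⟩ := hs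
        have h01 : (0 : Fin (n' + 2 + 1)) ≠ 1 := Fin.zero_ne_one
        set i1 : Fin (n' + 2 + 1) := if i0 = 0 then 1 else 0 with hi1
        have hne : i0 ≠ i1 := by
          rcases eq_or_ne i0 0 with h | h
          · rw [hi1, if_pos h, h]; exact h01
          · rw [hi1, if_neg h]; exact h
        refine ⟨fun i => if i = i0 then pderiv i1 f
            else if i = i1 then -(pderiv i0 f) else 0, ?_, i1, ?_⟩
        · have hsub : ∑ i, (if i = i0 then pderiv i1 f
              else if i = i1 then -(pderiv i0 f) else 0) * pderiv i f
              = ∑ i ∈ ({i0, i1} : Finset (Fin (n' + 2 + 1))),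
                (if i = i0 then pderiv i1 f
                  else if i = i1 then -(pderiv i0 f) else 0) * pderiv i f := by
            refine (Finset.sum_subset (Finset.subset_univ _) ?_).symm
            intro i _ hi
            simp only [Finset.mem_insert, Finset.mem_singleton, not_or] at hi
            simp [hi.1, hi.2]
          rw [hsub, Finset.sum_pair hne]
          simp [hne, Ne.symm hne]
          ring
        · simp [Ne.symm hne, hi0]
    -- express A through the generators
    obtain ⟨c, hc⟩ := (Submodule.mem_span_range_iff_exists_fun _).mp (hgen A hA)
    have hAk' : eval y (A k) = ∑ j, eval y (c j) * eval y (ρ j k) := by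
      rw [← hc]
      simp [Finset.sum_apply, Pi.smul_apply, smul_eq_mul]
    obtain ⟨j, -, hj⟩ : ∃ j ∈ Finset.univ, eval y (c j) * eval y (ρ j k) ≠ 0 := by
      by_contra h
      push_neg at h
      exact hAk (by rw [hAk', Finset.sum_eq_zero h])
    have hρ : eval y (ρ j k) ≠ 0 := fun h => hj (by simp [h])
    obtain ⟨k0, hk0⟩ : ∃ k0, y k0 ≠ 0 := Function.ne_iff.mp hy0
    exact ⟨(j, k0), k, mul_ne_zero (pow_ne_zero _ hk0) hρ⟩
  -- Step 2: per y ∈ Y, the coefficient tuples giving a syzygy vanishing at y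
  -- form a proper closed subspace of ℂ^{(m+1)(n+1)}.
  let S : Y → Submodule ℂ ((Fin (m + 1) × Fin (n' + 2 + 1)) → ℂ) := fun y =>
    { carrier := {c | ∀ i, ∑ p, c p * w y.1 p i = 0}
      zero_mem' := by simp
      add_mem' := by
        intro a b ha hb i
        simp only [Pi.add_apply, add_mul, Finset.sum_add_distrib, ha i, hb i, add_zero]
      smul_mem' := by
        intro r a ha i
        simp only [Pi.smul_apply, smul_eq_mul, mul_assoc, ← Finset.mul_sum, ha i, mul_zero] }
  have hSclosed : ∀ y, IsClosed ((S y : Set ((Fin (m + 1) × Fin (n' + 2 + 1)) → ℂ))) := fun y =>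
    (S y).closed_of_finiteDimensional
  have hSne : ∀ y : Y, (S y) ≠ ⊤ := by
    intro y hTop
    obtain ⟨p, i, hp⟩ := key y.1 y.2
    have : (Pi.single p 1 : (Fin (m + 1) × Fin (n' + 2 + 1)) → ℂ) ∈ S y :=
      hTop ▸ Submodule.mem_top
    have h2 := this i
    rw [Finset.sum_eq_single p (fun q _ hq => by simp [Pi.single_apply, hq])
      (by simp)] at h2
    simp [Pi.single_apply] at h2
    exact hp h2
  have hSdense : ∀ y : Y,
      Dense ((S y : Set ((Fin (m + 1) × Fin (n' + 2 + 1)) → ℂ))ᶜ) := by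
    intro y
    rw [← interior_eq_empty_iff_dense_compl]
    by_contra h
    exact hSne y ((S y).eq_top_of_nonempty_interior'
      (Set.nonempty_iff_ne_empty.mpr h))
  have hYc : Countable Y := hY.to_subtype
  have hdense : Dense (⋂ y : Y,
      ((S y : Set ((Fin (m + 1) × Fin (n' + 2 + 1)) → ℂ))ᶜ)) :=
    dense_iInter_of_isOpen (fun y => (hSclosed y).isOpen_compl) hSdense
  obtain ⟨c, hc⟩ := hdense.nonempty
  simp only [Set.mem_iInter, Set.mem_compl_iff, SetLike.mem_coe] at hc
  -- Step 3: assemble the syzygy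
  refine ⟨fun i => ∑ p : Fin (m + 1) × Fin (n' + 2 + 1),
      C (c p) * (X p.2 ^ (dm - dd p.1) * ρ p.1 i), ?_, ?_, ?_⟩
  · have : ∑ i, (∑ p : Fin (m + 1) × Fin (n' + 2 + 1),
        C (c p) * (X p.2 ^ (dm - dd p.1) * ρ p.1 i)) * pderiv i f
        = ∑ p : Fin (m + 1) × Fin (n' + 2 + 1),
          C (c p) * (X p.2 ^ (dm - dd p.1) * ∑ i, ρ p.1 i * pderiv i f) := by
      simp only [Finset.sum_mul, Finset.mul_sum, mul_assoc]
      exact Finset.sum_comm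
    rw [this]
    simp [hsyz]
  · intro i
    refine MvPolynomial.IsHomogeneous.sum _ _ _ fun p _ => ?_
    have h1 : (X (R := ℂ) p.2 ^ (dm - dd p.1) * ρ p.1 i).IsHomogeneous
        ((dm - dd p.1) + dd p.1) := (isHomogeneous_X_pow _ _).mul (hhom p.1 i)
    have h2 : (dm - dd p.1) + dd p.1 = dm :=
      Nat.sub_add_cancel (hmono (Fin.le_last p.1))
    rw [h2] at h1
    exact h1.C_mul _
  · intro y hy
    obtain ⟨i, hi⟩ : ∃ i, ∑ p, c p * w y p i ≠ 0 := by
      have h1 : ¬ ∀ i, ∑ p, c p * w y p i = 0 := fun h => hc ⟨y, hy⟩ h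
      push_neg at h1
      exact h1
    refine ⟨i, fun h => hi ?_⟩
    rw [← h]
    simp [hw, Finset.mul_sum, mul_assoc]
end
end
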